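/- arXiv:2207.04964 — 2 statements merged into one kernel-verified Lean document; each statement's English description precedes it below -/
import Mathlib

section
/- Let H be a finite connected simple graph with maximum degree Δ(H) = d ≥ 5, let p ≥ 2 and q ≥ 3 be integers with p + q = d + 1, let R be a graph with minimum degree δ(R) ≥ p − 1, and let G = K_{q+1} minus an edge. Let S ⊆ V(H) be such that H[S] contains no subgraph isomorphic to R and |S| is maximum among all subsets inducing an R-free subgraph. Then every vertex v ∈ V(H) ∖ S either lies in at most one copy of G in the induced subgraph H[V(H) ∖ S], or lies in a copy of K_{q+1} that forms a connected component of H[V(H) ∖ S]. -/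
open SimpleGraph

/-- The complete graph on `n` vertices minus one edge (the edge between vertices `0` and `1`). -/
def KsubE (n : ℕ) : SimpleGraph (Fin n) where
  Adj a b := a ≠ b ∧ a.val + b.val ≠ 1
  symm := by
    refine ⟨fun a b h => ?_⟩
    exact ⟨h.1.symm, by omega⟩
  loopless := by
    refine ⟨fun a h => ?_⟩
    exact h.1 rfl

/-- `H` contains a (not necessarily induced) subgraph isomorphic to `R`. -/
def Contains {α : Type*} {β : Type*} (H : SimpleGraph α) (R : SimpleGraph β) : Prop :=
  ∃ f : R →g H, Function.Injective f

lemma pair_eq {V : Type} {a₁ b₁ a₂ b₂ x y : V}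
    (h1 : (x = a₁ ∧ y = b₁) ∨ (x = b₁ ∧ y = a₁))
    (h2 : (x = a₂ ∧ y = b₂) ∨ (x = b₂ ∧ y = a₂)) :
    (a₂ = a₁ ∧ b₂ = b₁) ∨ (a₂ = b₁ ∧ b₂ = a₁) := by
  rcases h1 with ⟨rfl, rfl⟩ | ⟨rfl, rfl⟩ <;> rcases h2 with ⟨h3, h4⟩ | ⟨h3, h4⟩
  · exact Or.inl ⟨h3.symm, h4.symm⟩
  · exact Or.inr ⟨h4.symm, h3.symm⟩
  · exact Or.inr ⟨h3.symm, h4.symm⟩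
  · exact Or.inl ⟨h4.symm, h3.symm⟩
lemma lemA {V : Type} [Fintype V] [DecidableEq V] (H : SimpleGraph V) [DecidableRel H.Adj]
    {β : Type} [Fintype β] (R : SimpleGraph β) [DecidableRel R.Adj]
    {p : ℕ} (hδR : p - 1 ≤ R.minDegree)
    (S : Finset V)
    (hSfree : ¬ Contains (H.induce (S : Set V)) R)
    (hSmax : ∀ W : Finset V, ¬ Contains (H.induce (W : Set V)) R → W.card ≤ S.card)
    {x : V} (hx : x ∉ S) :
    p - 1 ≤ (S.filter (fun y => H.Adj x y)).card := by
  have hcon : Contains (H.induce ((insert x S : Finset V) : Set V)) R := by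
    by_contra hcon
    have := hSmax _ hcon
    rw [Finset.card_insert_of_notMem hx] at this
    omega
  obtain ⟨f, hf⟩ := hcon
  by_cases hb : ∃ b : β, ((f b : ↥(((insert x S : Finset V)) : Set V)) : V) = x
  · obtain ⟨b, hbx⟩ := hb
    have hdeg : p - 1 ≤ R.degree b := le_trans hδR (R.minDegree_le_degree b)
    rw [← R.card_neighborFinset_eq_degree] at hdeg
    refine le_trans hdeg (Finset.card_le_card_of_injOn (fun c => ((f c : _) : V)) ?_ ?_)
    · intro c hc
      rw [Finset.mem_coe, SimpleGraph.mem_neighborFinset] at hc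
      have hadj : H.Adj ((f b : _) : V) ((f c : _) : V) := f.map_adj hc
      rw [hbx] at hadj
      simp only [Finset.mem_coe, Finset.mem_filter]
      refine ⟨?_, hadj⟩
      have hmem : ((f c : _) : V) ∈ insert x S := by
        have h2 := (f c).2
        simpa using h2
      rcases Finset.mem_insert.mp hmem with h | h
      · exact absurd h hadj.ne'
      · exact h
    · intro c₁ _ c₂ _ hcc
      exact hf (Subtype.ext hcc)
  · push_neg at hb
    refine absurd ?_ hSfree
    refine ⟨⟨fun b => ⟨((f b : _) : V), ?_⟩, ?_⟩, ?_⟩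
    · have h2 := (f b).2
      simp only [Finset.coe_insert, Set.mem_insert_iff, Finset.mem_coe] at h2
      rcases h2 with h | h
      · exact absurd h (hb b)
      · simpa using h
    · intro a b hab
      exact f.map_adj hab
    · intro a b hab
      apply hf
      apply Subtype.ext
      have h := congrArg Subtype.val hab
      exact h

lemma lemB {V : Type} [Fintype V] [DecidableEq V] (H : SimpleGraph V) [DecidableRel H.Adj]
    {d p q : ℕ} (hd : H.maxDegree = d) (hp : 2 ≤ p) (hpq : p + q = d + 1)
    (S : Finset V) {x : V}
    (hA : p - 1 ≤ (S.filter (fun y => H.Adj x y)).card) :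
    ((H.neighborFinset x).filter (fun y => y ∉ S)).card ≤ q := by
  have hdeg : H.degree x ≤ d := hd ▸ H.degree_le_maxDegree x
  rw [← H.card_neighborFinset_eq_degree] at hdeg
  have hsplit := Finset.card_filter_add_card_filter_not
    (s := H.neighborFinset x) (p := fun y => y ∈ S)
  have heq : (H.neighborFinset x).filter (fun y => y ∈ S)
      = S.filter (fun y => H.Adj x y) := by
    ext y
    simp [SimpleGraph.mem_neighborFinset, and_comm]
  rw [heq] at hsplit
  omega
lemma lemC {V : Type} [Fintype V] [DecidableEq V] {H : SimpleGraph V} {q : ℕ} (hq : 3 ≤ q)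
    (C : H.Subgraph) (φ : C.coe ≃g KsubE (q + 1)) :
    ∃ (T : Finset V) (a b : V), ↑T = C.verts ∧ T.card = q + 1 ∧
      a ∈ T ∧ b ∈ T ∧ a ≠ b ∧
      (∀ x ∈ T, ∀ y ∈ T, x ≠ y → ¬(x = a ∧ y = b) → ¬(x = b ∧ y = a) → C.Adj x y) ∧
      (∀ x y : V, C.Adj x y → ¬(x = a ∧ y = b) ∧ ¬(x = b ∧ y = a)) := by
  classical
  have hfin : C.verts.Finite := Set.toFinite _
  have hv1 : ((1 : Fin (q+1)) : ℕ) = 1 := by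
    rw [Fin.val_one', Nat.mod_eq_of_lt (by omega)]
  have hback : ∀ z : C.verts, φ.symm (φ z) = z := fun z => φ.toEquiv.symm_apply_apply z
  have h01 : (0 : Fin (q+1)) ≠ 1 := by
    intro h
    have h2 := congrArg Fin.val h
    rw [Fin.val_zero, hv1] at h2
    omega
  refine ⟨hfin.toFinset, ((φ.symm 0 : C.verts) : V), ((φ.symm 1 : C.verts) : V),
    hfin.coe_toFinset, ?_, ?_, ?_, ?_, ?_, ?_⟩
  · rw [Set.Finite.card_toFinset]
    rw [← Fintype.card_fin (q+1)]
    exact Fintype.card_congr φ.toEquiv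
  · rw [Set.Finite.mem_toFinset]; exact (φ.symm 0).2
  · rw [Set.Finite.mem_toFinset]; exact (φ.symm 1).2
  · intro h
    exact h01 (φ.symm.injective (Subtype.coe_injective h))
  · intro x hx y hy hxy hm1 hm2
    rw [Set.Finite.mem_toFinset] at hx hy
    have hxy' : (⟨x, hx⟩ : C.verts) ≠ ⟨y, hy⟩ := fun h => hxy (congrArg Subtype.val h)
    have hφ : φ ⟨x, hx⟩ ≠ φ ⟨y, hy⟩ := fun h => hxy' (φ.injective h)
    have hsum : (φ ⟨x, hx⟩ : Fin (q+1)).val + (φ ⟨y, hy⟩ : Fin (q+1)).val ≠ 1 := by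
      intro hs
      have hcases : ((φ ⟨x, hx⟩ : Fin (q+1)).val = 0 ∧ (φ ⟨y, hy⟩ : Fin (q+1)).val = 1)
          ∨ ((φ ⟨x, hx⟩ : Fin (q+1)).val = 1 ∧ (φ ⟨y, hy⟩ : Fin (q+1)).val = 0) := by omega
      rcases hcases with ⟨h1, h2⟩ | ⟨h1, h2⟩
      · apply hm1
        constructor
        · have : φ ⟨x, hx⟩ = 0 := by apply Fin.ext; rw [h1, Fin.val_zero]
          rw [← this, hback]
        · have : φ ⟨y, hy⟩ = 1 := by apply Fin.ext; rw [h2, hv1]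
          rw [← this, hback]
      · apply hm2
        constructor
        · have : φ ⟨x, hx⟩ = 1 := by apply Fin.ext; rw [h1, hv1]
          rw [← this, hback]
        · have : φ ⟨y, hy⟩ = 0 := by apply Fin.ext; rw [h2, Fin.val_zero]
          rw [← this, hback]
    have : (KsubE (q+1)).Adj (φ ⟨x, hx⟩) (φ ⟨y, hy⟩) := ⟨hφ, hsum⟩
    have h2 : C.coe.Adj ⟨x, hx⟩ ⟨y, hy⟩ := φ.map_adj_iff.mp this
    exact h2
  · intro x y hxy
    have hx : x ∈ C.verts := C.edge_vert hxy
    have hy : y ∈ C.verts := C.edge_vert hxy.symm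
    have h2 : C.coe.Adj ⟨x, hx⟩ ⟨y, hy⟩ := hxy
    have h3 : (KsubE (q+1)).Adj (φ ⟨x, hx⟩) (φ ⟨y, hy⟩) := φ.map_adj_iff.mpr h2
    constructor
    · rintro ⟨rfl, rfl⟩
      apply h3.2
      have e1 : φ ⟨((φ.symm 0 : C.verts) : V), hx⟩ = 0 := by
        have : (⟨((φ.symm 0 : C.verts) : V), hx⟩ : C.verts) = φ.symm 0 := Subtype.ext rfl
        rw [this]; exact φ.apply_symm_apply 0
      have e2 : φ ⟨((φ.symm 1 : C.verts) : V), hy⟩ = 1 := by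
        have : (⟨((φ.symm 1 : C.verts) : V), hy⟩ : C.verts) = φ.symm 1 := Subtype.ext rfl
        rw [this]; exact φ.apply_symm_apply 1
      rw [e1, e2, Fin.val_zero, hv1]
    · rintro ⟨rfl, rfl⟩
      apply h3.2
      have e1 : φ ⟨((φ.symm 1 : C.verts) : V), hx⟩ = 1 := by
        have : (⟨((φ.symm 1 : C.verts) : V), hx⟩ : C.verts) = φ.symm 1 := Subtype.ext rfl
        rw [this]; exact φ.apply_symm_apply 1
      have e2 : φ ⟨((φ.symm 0 : C.verts) : V), hy⟩ = 0 := by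
        have : (⟨((φ.symm 0 : C.verts) : V), hy⟩ : C.verts) = φ.symm 0 := Subtype.ext rfl
        rw [this]; exact φ.apply_symm_apply 0
      rw [e1, e2, Fin.val_zero, hv1]
lemma same_verts {V : Type} [DecidableEq V] {H : SimpleGraph V} {q : ℕ} (hq : 3 ≤ q)
    (S : Finset V)
    (hout : ∀ x : V, x ∉ S → ∀ N : Finset V, (∀ y ∈ N, H.Adj x y ∧ y ∉ S) → N.card ≤ q)
    (T₁ T₂ : Finset V) (a₁ b₁ a₂ b₂ : V)
    (h₁S : ∀ y ∈ T₁, y ∉ S) (h₂S : ∀ y ∈ T₂, y ∉ S)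
    (hc₁ : T₁.card = q + 1) (hc₂ : T₂.card = q + 1)
    (hab₁ : a₁ ≠ b₁) (hab₂ : a₂ ≠ b₂)
    (hadj₁ : ∀ x ∈ T₁, ∀ y ∈ T₁, x ≠ y → ¬(x = a₁ ∧ y = b₁) → ¬(x = b₁ ∧ y = a₁) → H.Adj x y)
    (hadj₂ : ∀ x ∈ T₂, ∀ y ∈ T₂, x ≠ y → ¬(x = a₂ ∧ y = b₂) → ¬(x = b₂ ∧ y = a₂) → H.Adj x y)
    (v : V) (hv₁ : v ∈ T₁) (hv₂ : v ∈ T₂) :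
    T₁ = T₂ := by
  classical
  by_contra hne
  set I := T₁ ∩ T₂ with hIdef
  have hvI : v ∈ I := Finset.mem_inter.mpr ⟨hv₁, hv₂⟩
  have hsq : I.card ≤ q := by
    by_contra h
    push_neg at h
    have h1 : I = T₁ := Finset.eq_of_subset_of_card_le Finset.inter_subset_left (by omega)
    have h2 : I = T₂ := Finset.eq_of_subset_of_card_le Finset.inter_subset_right (by omega)
    exact hne (h1 ▸ h2)
  have hcards : (T₁ ∪ T₂).card + I.card = (q + 1) + (q + 1) := by
    rw [Finset.card_union_add_card_inter, hc₁, hc₂]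
  -- contrapositive of hadj₁ / hadj₂
  have hm1 : ∀ x ∈ T₁, ∀ y ∈ T₁, y ≠ x → ¬H.Adj x y →
      ((x = a₁ ∧ y = b₁) ∨ (x = b₁ ∧ y = a₁)) := by
    intro x hx y hy hyx hnadj
    by_contra hc
    rw [not_or] at hc
    exact hnadj (hadj₁ x hx y hy (Ne.symm hyx) hc.1 hc.2)
  have hm2 : ∀ x ∈ T₂, ∀ y ∈ T₂, y ≠ x → ¬H.Adj x y →
      ((x = a₂ ∧ y = b₂) ∨ (x = b₂ ∧ y = a₂)) := by
    intro x hx y hy hyx hnadj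
    by_contra hc
    rw [not_or] at hc
    exact hnadj (hadj₂ x hx y hy (Ne.symm hyx) hc.1 hc.2)
  have hstruct : ∀ x ∈ I, ∀ y ∈ T₁ ∪ T₂, y ≠ x → ¬H.Adj x y →
      (((x = a₁ ∧ y = b₁) ∨ (x = b₁ ∧ y = a₁)) ∨ ((x = a₂ ∧ y = b₂) ∨ (x = b₂ ∧ y = a₂))) := by
    intro x hx y hy hyx hnadj
    rw [Finset.mem_inter] at hx
    rcases Finset.mem_union.mp hy with h | h
    · exact Or.inl (hm1 x hx.1 y h hyx hnadj)
    · exact Or.inr (hm2 x hx.2 y h hyx hnadj)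
  -- the non-neighbor finset and its counting bound
  have hkey : ∀ x ∈ I, ∃ Y : Finset V, q + 1 ≤ I.card + Y.card ∧
      ∀ y ∈ Y, y ∈ T₁ ∪ T₂ ∧ y ≠ x ∧ ¬H.Adj x y := by
    intro x hx
    have hxT₁ : x ∈ T₁ := (Finset.mem_inter.mp hx).1
    have hxU : x ∈ T₁ ∪ T₂ := Finset.mem_union_left _ hxT₁
    set A := (T₁ ∪ T₂).erase x with hAdef
    have hAcard : A.card + 1 = (T₁ ∪ T₂).card := by
      rw [hAdef, Finset.card_erase_of_mem hxU]
      have : 1 ≤ (T₁ ∪ T₂).card := Finset.card_pos.mpr ⟨x, hxU⟩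
      omega
    have hsplit := Finset.card_filter_add_card_filter_not
      (s := A) (p := fun y => H.Adj x y)
    have hNb : (A.filter (fun y => H.Adj x y)).card ≤ q := by
      apply hout x (h₁S x hxT₁)
      intro y hy
      rw [Finset.mem_filter] at hy
      refine ⟨hy.2, ?_⟩
      have hyU : y ∈ T₁ ∪ T₂ := Finset.mem_of_mem_erase (hAdef ▸ hy.1)
      rcases Finset.mem_union.mp hyU with h | h
      · exact h₁S y h
      · exact h₂S y h
    refine ⟨A.filter (fun y => ¬H.Adj x y), by omega, ?_⟩
    intro y hy
    rw [Finset.mem_filter] at hy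
    exact ⟨Finset.mem_of_mem_erase hy.1, Finset.ne_of_mem_erase hy.1, hy.2⟩
  -- uniqueness helpers
  have huniq₁ : ∀ x y y' : V, ((x = a₁ ∧ y = b₁) ∨ (x = b₁ ∧ y = a₁)) →
      ((x = a₁ ∧ y' = b₁) ∨ (x = b₁ ∧ y' = a₁)) → y = y' := by
    rintro x y y' h1 h2
    rcases h1 with ⟨rfl, rfl⟩ | ⟨rfl, rfl⟩ <;> rcases h2 with ⟨h, rfl⟩ | ⟨h, rfl⟩ <;>
      first | rfl | exact absurd h hab₁ | exact absurd h (Ne.symm hab₁)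
  have huniq₂ : ∀ x y y' : V, ((x = a₂ ∧ y = b₂) ∨ (x = b₂ ∧ y = a₂)) →
      ((x = a₂ ∧ y' = b₂) ∨ (x = b₂ ∧ y' = a₂)) → y = y' := by
    rintro x y y' h1 h2
    rcases h1 with ⟨rfl, rfl⟩ | ⟨rfl, rfl⟩ <;> rcases h2 with ⟨h, rfl⟩ | ⟨h, rfl⟩ <;>
      first | rfl | exact absurd h hab₂ | exact absurd h (Ne.symm hab₂)
  have hP : ∀ x y : V, ((x = a₁ ∧ y = b₁) ∨ (x = b₁ ∧ y = a₁)) →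
      ((x = a₂ ∧ y = b₂) ∨ (x = b₂ ∧ y = a₂)) →
      ((a₂ = a₁ ∧ b₂ = b₁) ∨ (a₂ = b₁ ∧ b₂ = a₁)) := by
    rintro x y h1 h2
    rcases h1 with ⟨rfl, rfl⟩ | ⟨rfl, rfl⟩ <;> rcases h2 with ⟨h3, h4⟩ | ⟨h3, h4⟩
    · exact Or.inl ⟨h3.symm, h4.symm⟩
    · exact Or.inr ⟨h4.symm, h3.symm⟩
    · exact Or.inr ⟨h3.symm, h4.symm⟩
    · exact Or.inl ⟨h4.symm, h3.symm⟩
  by_cases hPP : (a₂ = a₁ ∧ b₂ = b₁) ∨ (a₂ = b₁ ∧ b₂ = a₁)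
  · -- the two missing pairs coincide: all non-neighbors are unique
    have hm21 : ∀ x y : V, ((x = a₂ ∧ y = b₂) ∨ (x = b₂ ∧ y = a₂)) →
        ((x = a₁ ∧ y = b₁) ∨ (x = b₁ ∧ y = a₁)) := by
      rcases hPP with ⟨rfl, rfl⟩ | ⟨rfl, rfl⟩
      · exact fun x y h => h
      · exact fun x y h => h.symm
    have hIcard : q ≤ I.card := by
      obtain ⟨Y, hle, hYmem⟩ := hkey v hvI
      have hY1 : Y.card ≤ 1 := by
        rw [Finset.card_le_one]
        intro y hy y' hy'
        obtain ⟨hyU, hyv, hyn⟩ := hYmem y hy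
        obtain ⟨hyU', hyv', hyn'⟩ := hYmem y' hy'
        have k1 := hstruct v hvI y hyU hyv hyn
        have k2 := hstruct v hvI y' hyU' hyv' hyn'
        have k1' : (v = a₁ ∧ y = b₁) ∨ (v = b₁ ∧ y = a₁) := by
          rcases k1 with h | h
          · exact h
          · exact hm21 v y h
        have k2' : (v = a₁ ∧ y' = b₁) ∨ (v = b₁ ∧ y' = a₁) := by
          rcases k2 with h | h
          · exact h
          · exact hm21 v y' h
        exact huniq₁ v y y' k1' k2'
      omega
    have hsub : I ⊆ {a₁, b₁} := by
      intro x hx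
      obtain ⟨Y, hle, hYmem⟩ := hkey x hx
      have hY0 : 0 < Y.card := by omega
      obtain ⟨y, hy⟩ := Finset.card_pos.mp hY0
      obtain ⟨hyU, hyx, hyn⟩ := hYmem y hy
      have k1 := hstruct x hx y hyU hyx hyn
      have k1' : (x = a₁ ∧ y = b₁) ∨ (x = b₁ ∧ y = a₁) := by
        rcases k1 with h | h
        · exact h
        · exact hm21 x y h
      rcases k1' with ⟨rfl, _⟩ | ⟨rfl, _⟩
      · exact Finset.mem_insert_self _ _
      · exact Finset.mem_insert_of_mem (Finset.mem_singleton_self _)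
    have h2 : I.card ≤ 2 := le_trans (Finset.card_le_card hsub)
      (le_trans (Finset.card_insert_le _ _) (by simp))
    omega
  · -- missing pairs differ
    have hnotboth : ∀ x y : V, ((x = a₁ ∧ y = b₁) ∨ (x = b₁ ∧ y = a₁)) →
        ((x = a₂ ∧ y = b₂) ∨ (x = b₂ ∧ y = a₂)) → False :=
      fun x y h1 h2 => hPP (hP x y h1 h2)
    -- I.card ≥ q - 1, via v and the two-candidate bound
    have hIcard : q - 1 ≤ I.card := by
      obtain ⟨Y, hle, hYmem⟩ := hkey v hvI
      have hY2 : Y.card ≤ 2 := by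
        have hsub : Y ⊆ {if v = a₁ then b₁ else a₁, if v = a₂ then b₂ else a₂} := by
          intro y hy
          obtain ⟨hyU, hyv, hyn⟩ := hYmem y hy
          rcases hstruct v hvI y hyU hyv hyn with h | h <;>
            rcases h with ⟨rfl, rfl⟩ | ⟨rfl, rfl⟩ <;>
            simp [hab₁, Ne.symm hab₁, hab₂, Ne.symm hab₂]
        exact le_trans (Finset.card_le_card hsub)
          (le_trans (Finset.card_insert_le _ _) (by simp))
      omega
    have hIq : I.card = q ∨ I.card = q - 1 := by omega
    rcases hIq with hs | hs
    · -- I.card = q : single vertex on each side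
      have hd1 : (T₁ \ T₂).card = 1 := by
        have := Finset.card_inter_add_card_sdiff T₁ T₂
        rw [← hIdef] at this
        omega
      have hd2 : (T₂ \ T₁).card = 1 := by
        have := Finset.card_inter_add_card_sdiff T₂ T₁
        rw [Finset.inter_comm, ← hIdef] at this
        omega
      obtain ⟨u, hu⟩ := Finset.card_eq_one.mp hd1
      obtain ⟨w, hw⟩ := Finset.card_eq_one.mp hd2
      have htype : ∀ x ∈ I, ((x = a₁ ∧ u = b₁) ∨ (x = b₁ ∧ u = a₁)) ∨
          ((x = a₂ ∧ w = b₂) ∨ (x = b₂ ∧ w = a₂)) := by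
        intro x hx
        have hxT : x ∈ T₁ ∧ x ∈ T₂ := Finset.mem_inter.mp hx
        obtain ⟨Y, hle, hYmem⟩ := hkey x hx
        have hY0 : 0 < Y.card := by omega
        obtain ⟨y, hy⟩ := Finset.card_pos.mp hY0
        obtain ⟨hyU, hyx, hyn⟩ := hYmem y hy
        rcases hstruct x hx y hyU hyx hyn with h | h
        · -- match₁ : then y ∉ T₂, so y = u
          have hyT₂ : y ∉ T₂ := by
            intro hyT₂
            exact hnotboth x y h (hm2 x hxT.2 y hyT₂ hyx hyn)
          have hyT₁ : y ∈ T₁ := by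
            rcases Finset.mem_union.mp hyU with hh | hh
            · exact hh
            · exact absurd hh hyT₂
          have : y ∈ T₁ \ T₂ := Finset.mem_sdiff.mpr ⟨hyT₁, hyT₂⟩
          rw [hu, Finset.mem_singleton] at this
          subst this
          exact Or.inl h
        · -- match₂ : then y ∉ T₁, so y = w
          have hyT₁ : y ∉ T₁ := by
            intro hyT₁
            exact hnotboth x y (hm1 x hxT.1 y hyT₁ hyx hyn) h
          have hyT₂ : y ∈ T₂ := by
            rcases Finset.mem_union.mp hyU with hh | hh
            · exact absurd hh hyT₁
            · exact hh
          have : y ∈ T₂ \ T₁ := Finset.mem_sdiff.mpr ⟨hyT₂, hyT₁⟩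
          rw [hw, Finset.mem_singleton] at this
          subst this
          exact Or.inr h
      have hsub : I ⊆ {if u = b₁ then a₁ else b₁, if w = b₂ then a₂ else b₂} := by
        intro x hx
        rcases htype x hx with h | h <;> rcases h with ⟨rfl, h'⟩ | ⟨rfl, h'⟩ <;>
          simp [h', hab₁, Ne.symm hab₁, hab₂, Ne.symm hab₂]
      have h2 : I.card ≤ 2 := le_trans (Finset.card_le_card hsub)
        (le_trans (Finset.card_insert_le _ _) (by simp))
      omega
    · -- I.card = q - 1 : every x in I is endpoint of both missing pairs
      have htype : ∀ x ∈ I, (x = a₁ ∨ x = b₁) ∧ (x = a₂ ∨ x = b₂) := by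
        intro x hx
        obtain ⟨Y, hle, hYmem⟩ := hkey x hx
        have hY2 : 1 < Y.card := by omega
        obtain ⟨y, hy, y', hy', hyy'⟩ := Finset.one_lt_card.mp hY2
        obtain ⟨hyU, hyx, hyn⟩ := hYmem y hy
        obtain ⟨hyU', hyx', hyn'⟩ := hYmem y' hy'
        have k1 := hstruct x hx y hyU hyx hyn
        have k2 := hstruct x hx y' hyU' hyx' hyn'
        rcases k1 with h1 | h1 <;> rcases k2 with h2 | h2
        · exact absurd (huniq₁ x y y' h1 h2) hyy'
        · constructor
          · rcases h1 with ⟨rfl, _⟩ | ⟨rfl, _⟩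
            · exact Or.inl rfl
            · exact Or.inr rfl
          · rcases h2 with ⟨rfl, _⟩ | ⟨rfl, _⟩
            · exact Or.inl rfl
            · exact Or.inr rfl
        · constructor
          · rcases h2 with ⟨rfl, _⟩ | ⟨rfl, _⟩
            · exact Or.inl rfl
            · exact Or.inr rfl
          · rcases h1 with ⟨rfl, _⟩ | ⟨rfl, _⟩
            · exact Or.inl rfl
            · exact Or.inr rfl
        · exact absurd (huniq₂ x y y' h1 h2) hyy'
      have hI2 : 1 < I.card := by omega
      obtain ⟨x₁, hx₁, x₂, hx₂, hx₁₂⟩ := Finset.one_lt_card.mp hI2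
      obtain ⟨hA1, hA2⟩ := htype x₁ hx₁
      obtain ⟨hB1, hB2⟩ := htype x₂ hx₂
      apply hPP
      apply hP x₁ x₂
      · rcases hA1 with rfl | rfl <;> rcases hB1 with h | h
        · exact absurd h.symm hx₁₂
        · exact Or.inl ⟨rfl, h⟩
        · exact Or.inr ⟨rfl, h⟩
        · exact absurd h.symm hx₁₂
      · rcases hA2 with rfl | rfl <;> rcases hB2 with h | h
        · exact absurd h.symm hx₁₂
        · exact Or.inl ⟨rfl, h⟩
        · exact Or.inr ⟨rfl, h⟩
        · exact absurd h.symm hx₁₂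

theorem statement4 {V : Type} [Fintype V] [DecidableEq V]
    (H : SimpleGraph V) [DecidableRel H.Adj]
    (hconn : H.Connected) (d : ℕ) (hd : H.maxDegree = d) (hd5 : 5 ≤ d)
    (p q : ℕ) (hp : 2 ≤ p) (hq : 3 ≤ q) (hpq : p + q = d + 1)
    {β : Type} [Fintype β] (R : SimpleGraph β) [DecidableRel R.Adj]
    (hδR : p - 1 ≤ R.minDegree)
    (S : Finset V)
    (hSfree : ¬ Contains (H.induce (S : Set V)) R)
    (hSmax : ∀ W : Finset V, ¬ Contains (H.induce (W : Set V)) R → W.card ≤ S.card)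
    (v : V) (hv : v ∉ S) :
    -- either `v` lies in at most one copy of `G = K_{q+1} ∖ e` in `H[V ∖ S]` ...
    (∀ C₁ C₂ : H.Subgraph,
      C₁.verts ⊆ (↑S : Set V)ᶜ → C₂.verts ⊆ (↑S : Set V)ᶜ →
      Nonempty (C₁.coe ≃g KsubE (q + 1)) → Nonempty (C₂.coe ≃g KsubE (q + 1)) →
      v ∈ C₁.verts → v ∈ C₂.verts → C₁ = C₂) ∨
    -- ... or `v` lies in a copy of `K_{q+1}` forming a connected component of `H[V ∖ S]`,
    -- i.e. the connected component of `v` in `H[V ∖ S]` has `q+1` vertices,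
    -- pairwise adjacent
    (((H.induce ((↑S : Set V)ᶜ)).connectedComponentMk
        ⟨v, by simpa using hv⟩).supp.ncard = q + 1 ∧
      ∀ x ∈ ((H.induce ((↑S : Set V)ᶜ)).connectedComponentMk
          ⟨v, by simpa using hv⟩).supp,
        ∀ y ∈ ((H.induce ((↑S : Set V)ᶜ)).connectedComponentMk
          ⟨v, by simpa using hv⟩).supp,
        x ≠ y → (H.induce ((↑S : Set V)ᶜ)).Adj x y) := by
  classical
  -- every vertex outside S has at most q neighbors outside S
  have houtN : ∀ x : V, x ∉ S → ∀ N : Finset V,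
      (∀ y ∈ N, H.Adj x y ∧ y ∉ S) → N.card ≤ q := by
    intro x hxS N hN
    have hb := lemB H hd hp hpq S (lemA H R hδR S hSfree hSmax hxS)
    refine le_trans (Finset.card_le_card ?_) hb
    intro y hy
    rw [Finset.mem_filter, SimpleGraph.mem_neighborFinset]
    exact hN y hy
  by_cases halt : ∀ C₁ C₂ : H.Subgraph,
      C₁.verts ⊆ (↑S : Set V)ᶜ → C₂.verts ⊆ (↑S : Set V)ᶜ →
      Nonempty (C₁.coe ≃g KsubE (q + 1)) → Nonempty (C₂.coe ≃g KsubE (q + 1)) →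
      v ∈ C₁.verts → v ∈ C₂.verts → C₁ = C₂
  · exact Or.inl halt
  · right
    push_neg at halt
    obtain ⟨C₁, C₂, hCS₁, hCS₂, hiso₁, hiso₂, hvC₁, hvC₂, hC12⟩ := halt
    obtain ⟨φ₁⟩ := hiso₁
    obtain ⟨φ₂⟩ := hiso₂
    obtain ⟨T₁, a₁, b₁, hTc₁, hc₁, haT₁, hbT₁, hab₁, hadjT₁, hnm₁⟩ := lemC hq C₁ φ₁
    obtain ⟨T₂, a₂, b₂, hTc₂, hc₂, haT₂, hbT₂, hab₂, hadjT₂, hnm₂⟩ := lemC hq C₂ φ₂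
    have h₁S : ∀ y ∈ T₁, y ∉ S := by
      intro y hy
      have : y ∈ C₁.verts := hTc₁ ▸ Finset.mem_coe.mpr hy
      simpa using hCS₁ this
    have h₂S : ∀ y ∈ T₂, y ∉ S := by
      intro y hy
      have : y ∈ C₂.verts := hTc₂ ▸ Finset.mem_coe.mpr hy
      simpa using hCS₂ this
    have hvT₁ : v ∈ T₁ := by
      rw [← Finset.mem_coe, hTc₁]; exact hvC₁
    have hvT₂ : v ∈ T₂ := by
      rw [← Finset.mem_coe, hTc₂]; exact hvC₂
    -- the two copies must have the same vertex set
    have hadj₁ : ∀ x ∈ T₁, ∀ y ∈ T₁, x ≠ y → ¬(x = a₁ ∧ y = b₁) → ¬(x = b₁ ∧ y = a₁) →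
        H.Adj x y := fun x hx y hy hxy hm1 hm2 => (hadjT₁ x hx y hy hxy hm1 hm2).adj_sub
    have hadj₂ : ∀ x ∈ T₂, ∀ y ∈ T₂, x ≠ y → ¬(x = a₂ ∧ y = b₂) → ¬(x = b₂ ∧ y = a₂) →
        H.Adj x y := fun x hx y hy hxy hm1 hm2 => (hadjT₂ x hx y hy hxy hm1 hm2).adj_sub
    have hT12 : T₁ = T₂ :=
      same_verts hq S houtN T₁ T₂ a₁ b₁ a₂ b₂ h₁S h₂S hc₁ hc₂ hab₁ hab₂ hadj₁ hadj₂ v hvT₁ hvT₂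
    -- the two missing pairs must differ
    have hpair : ¬((a₂ = a₁ ∧ b₂ = b₁) ∨ (a₂ = b₁ ∧ b₂ = a₁)) := by
      intro hpp
      apply hC12
      apply SimpleGraph.Subgraph.ext
      · rw [← hTc₁, ← hTc₂, hT12]
      · ext x y
        have hch₁ : C₁.Adj x y ↔
            (x ∈ T₁ ∧ y ∈ T₁ ∧ x ≠ y ∧ ¬(x = a₁ ∧ y = b₁) ∧ ¬(x = b₁ ∧ y = a₁)) := by
          constructor
          · intro h
            have hx : x ∈ T₁ := by rw [← Finset.mem_coe, hTc₁]; exact C₁.edge_vert h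
            have hy : y ∈ T₁ := by rw [← Finset.mem_coe, hTc₁]; exact C₁.edge_vert h.symm
            exact ⟨hx, hy, h.adj_sub.ne, (hnm₁ x y h).1, (hnm₁ x y h).2⟩
          · rintro ⟨hx, hy, hxy, hm1, hm2⟩
            exact hadjT₁ x hx y hy hxy hm1 hm2
        have hch₂ : C₂.Adj x y ↔
            (x ∈ T₂ ∧ y ∈ T₂ ∧ x ≠ y ∧ ¬(x = a₂ ∧ y = b₂) ∧ ¬(x = b₂ ∧ y = a₂)) := by
          constructor
          · intro h
            have hx : x ∈ T₂ := by rw [← Finset.mem_coe, hTc₂]; exact C₂.edge_vert h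
            have hy : y ∈ T₂ := by rw [← Finset.mem_coe, hTc₂]; exact C₂.edge_vert h.symm
            exact ⟨hx, hy, h.adj_sub.ne, (hnm₂ x y h).1, (hnm₂ x y h).2⟩
          · rintro ⟨hx, hy, hxy, hm1, hm2⟩
            exact hadjT₂ x hx y hy hxy hm1 hm2
        rw [hch₁, hch₂, hT12]
        rcases hpp with ⟨rfl, rfl⟩ | ⟨rfl, rfl⟩
        · exact Iff.rfl
        · constructor <;> rintro ⟨h1, h2, h3, h4, h5⟩ <;> exact ⟨h1, h2, h3, h5, h4⟩
    -- T₁ induces a complete graph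
    have hcomplete : ∀ x ∈ T₁, ∀ y ∈ T₁, x ≠ y → H.Adj x y := by
      intro x hx y hy hxy
      by_cases hm : (x = a₁ ∧ y = b₁) ∨ (x = b₁ ∧ y = a₁)
      · refine hadj₂ x (hT12 ▸ hx) y (hT12 ▸ hy) hxy ?_ ?_
        · intro hmm
          exact hpair (pair_eq hm (Or.inl hmm))
        · intro hmm
          exact hpair (pair_eq hm (Or.inr hmm))
      · rw [not_or] at hm
        exact hadj₁ x hx y hy hxy hm.1 hm.2
    -- T₁ is closed under taking neighbors outside S
    have hclosed : ∀ x ∈ T₁, ∀ y : V, H.Adj x y → y ∉ S → y ∈ T₁ := by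
      intro x hx y hxy hyS
      have hxS : x ∉ S := h₁S x hx
      have hsub : T₁.erase x ⊆ (H.neighborFinset x).filter (fun z => z ∉ S) := by
        intro z hz
        have hzT : z ∈ T₁ := Finset.mem_of_mem_erase hz
        have hzx : z ≠ x := Finset.ne_of_mem_erase hz
        rw [Finset.mem_filter, SimpleGraph.mem_neighborFinset]
        exact ⟨hcomplete x hx z hzT (Ne.symm hzx), h₁S z hzT⟩
      have hcard : ((H.neighborFinset x).filter (fun z => z ∉ S)).card ≤ q :=
        houtN x hxS _ (by
          intro z hz
          rw [Finset.mem_filter, SimpleGraph.mem_neighborFinset] at hz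
          exact hz)
      have herase : (T₁.erase x).card = q := by
        rw [Finset.card_erase_of_mem hx, hc₁]
        omega
      have heq : T₁.erase x = (H.neighborFinset x).filter (fun z => z ∉ S) :=
        Finset.eq_of_subset_of_card_le hsub (by omega)
      have hy : y ∈ T₁.erase x := by
        rw [heq, Finset.mem_filter, SimpleGraph.mem_neighborFinset]
        exact ⟨hxy, hyS⟩
      exact Finset.mem_of_mem_erase hy
    -- walks in H[Sᶜ] starting in T₁ stay in T₁
    have hwalk : ∀ (x y : ↥((↑S : Set V)ᶜ))
        (w : (H.induce ((↑S : Set V)ᶜ)).Walk x y), (x : V) ∈ T₁ → (y : V) ∈ T₁ := by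
      intro x y w
      induction w with
      | nil => exact id
      | @cons u z _ h p ih =>
        intro hu
        have hadj : H.Adj (u : V) (z : V) := h
        have hzS : (z : V) ∉ S := fun hzs => z.2 (Finset.mem_coe.mpr hzs)
        exact ih (hclosed _ hu _ hadj hzS)
    have hsupp : ((H.induce ((↑S : Set V)ᶜ)).connectedComponentMk
        ⟨v, by simpa using hv⟩).supp = Subtype.val ⁻¹' (T₁ : Set V) := by
      ext x
      rw [SimpleGraph.ConnectedComponent.mem_supp_iff, SimpleGraph.ConnectedComponent.eq]
      constructor
      · intro hr
        obtain ⟨w⟩ := hr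
        exact hwalk _ _ w.reverse hvT₁
      · intro hxT
        have hxT' : (x : V) ∈ T₁ := hxT
        by_cases hxv : x = (⟨v, by simpa using hv⟩ : ↥((↑S : Set V)ᶜ))
        · rw [hxv]
        · apply SimpleGraph.Adj.reachable
          have hne : (x : V) ≠ v := fun h => hxv (Subtype.ext h)
          exact hcomplete (x : V) hxT' v hvT₁ hne
    constructor
    · rw [hsupp]
      rw [← Set.ncard_image_of_injective _ Subtype.val_injective,
        Set.image_preimage_eq_inter_range, Subtype.range_coe]
      have hinter : (T₁ : Set V) ∩ (↑S : Set V)ᶜ = (T₁ : Set V) := by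
        apply Set.inter_eq_self_of_subset_left
        intro z hz
        simp only [Set.mem_compl_iff, Finset.mem_coe]
        exact h₁S z (Finset.mem_coe.mp hz)
      rw [hinter, Set.ncard_coe_finset, hc₁]
    · intro x hx y hy hxy
      rw [hsupp, Set.mem_preimage, Finset.mem_coe] at hx hy
      exact hcomplete (x : V) hx (y : V) hy (fun h => hxy (Subtype.ext h))
end

section
/- Let H be a finite connected simple graph with maximum degree Δ(H) = d ≥ 6 and clique number ω(H) = d − 1. Then there exists a partition of V(H) into two sets V₁ and V₂ such that H[V₁] contains no clique of size d − 1 and H[V₂] contains no triangle (no clique of size 3). -/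
open SimpleGraph Finset

namespace BK


variable {V : Type} [Fintype V] [DecidableEq V] (H : SimpleGraph V) [DecidableRel H.Adj]
  (d : ℕ)

/-- neighbors of `z` inside `A` -/
def n1 (A : Finset V) (z : V) : Finset V := H.neighborFinset z ∩ A
/-- neighbors of `z` outside `A` -/
def n2 (A : Finset V) (z : V) : Finset V := H.neighborFinset z \ A

/-- `A` contains no `(d-1)`-clique -/
def free (A : Finset V) : Prop := ∀ t : Finset V, t ⊆ A → ¬ H.IsNClique (d-1) t

/-- number of triangles inside `B` -/
def tr (B : Finset V) : ℕ := ((B.powersetCard 3).filter (fun t => H.IsNClique 3 t)).card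

/-- number of triangles inside `B` through `z` -/
def trAt (z : V) (B : Finset V) : ℕ :=
  ((B.powersetCard 3).filter (fun t => H.IsNClique 3 t ∧ z ∈ t)).card

/-- an optimal partition: `A` of maximum size among `free` sets, with `tr Aᶜ` minimal -/
def Opt (A : Finset V) : Prop :=
  free H d A ∧ (∀ B : Finset V, free H d B → B.card ≤ A.card) ∧
    (∀ B : Finset V, free H d B → B.card = A.card → tr H Aᶜ ≤ tr H Bᶜ)

variable {H d}


def pr (H : SimpleGraph V) [DecidableRel H.Adj] (z : V) (B : Finset V) : ℕ :=
  (((H.neighborFinset z ∩ B).powersetCard 2).filter (fun e => H.IsNClique 2 e)).card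

instance free_dec : DecidablePred (free H d) := by
  intro A; unfold free; infer_instance

lemma exists_opt (hd6 : 6 ≤ d) : ∃ A : Finset V, Opt H d A := by
  classical
  have hfe : (univ.powerset.filter (fun A => free H d A)).Nonempty := by
    refine ⟨∅, ?_⟩
    simp only [mem_filter, mem_powerset, empty_subset, true_and]
    intro t ht hcl
    have : t = ∅ := subset_empty.mp ht
    subst this
    have := hcl.card_eq
    simp at this
    omega
  obtain ⟨M, hM, hMmax⟩ := Finset.exists_max_image _ (fun A => A.card) hfe
  have hMfree : free H d M := (mem_filter.mp hM).2
  have hge : (univ.powerset.filter (fun A => free H d A ∧ A.card = M.card)).Nonempty := by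
    exact ⟨M, by simp [hMfree]⟩
  obtain ⟨A, hA, hAmin⟩ := Finset.exists_min_image _ (fun A => tr H Aᶜ) hge
  simp only [mem_filter, mem_powerset] at hA
  refine ⟨A, hA.2.1, ?_, ?_⟩
  · intro B hB
    have := hMmax B (by simp [hB])
    omega
  · intro B hB hBcard
    refine hAmin B ?_
    simp only [mem_filter, mem_powerset, subset_univ, true_and]
    exact ⟨hB, by rw [hBcard, hA.2.2]⟩

section Fixed

variable (hd6 : 6 ≤ d) (hmax : ∀ v : V, H.degree v ≤ d)
  (hno : ∀ s : Finset V, ¬ H.IsNClique d s)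

lemma n1_union_n2 (A : Finset V) (z : V) : n1 H A z ∪ n2 H A z = H.neighborFinset z := by
  ext x; simp [n1, n2]; tauto

lemma n1_card_add_n2_card (A : Finset V) (z : V) :
    (n1 H A z).card + (n2 H A z).card = H.degree z := by
  rw [← H.card_neighborFinset_eq_degree, ← n1_union_n2 (A := A) (z := z)]
  rw [card_union_of_disjoint]
  exact disjoint_right.mpr (fun a ha => by
    simp only [n2, mem_sdiff] at ha
    simp [n1, ha.2])

lemma mem_n1 {A : Finset V} {z x : V} : x ∈ n1 H A z ↔ H.Adj z x ∧ x ∈ A := by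
  simp [n1]

lemma mem_n2 {A : Finset V} {z x : V} : x ∈ n2 H A z ↔ H.Adj z x ∧ x ∉ A := by
  simp [n2]

/-- every vertex outside an optimal `A` has a `(d-2)`-clique among its neighbors in `A` -/
lemma exists_clique_nbhd {A : Finset V} (hA : Opt H d A) {p : V} (hp : p ∉ A) :
    ∃ C : Finset V, C ⊆ n1 H A p ∧ H.IsNClique (d-2) C := by
  by_contra hcon
  push_neg at hcon
  -- insert p A is free, contradicting maximality
  have hfree : free H d (insert p A) := by
    intro t ht hcl
    by_cases hpt : p ∈ t
    · have hsub : t.erase p ⊆ n1 H A p := by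
        intro x hx
        rw [mem_erase] at hx
        rw [mem_n1]
        have hxA : x ∈ A := by
          have := ht hx.2
          rw [mem_insert] at this
          tauto
        exact ⟨hcl.1 (by simp [hpt]) (by simp [hx.2]) (Ne.symm hx.1), hxA⟩
      refine hcon _ hsub ?_
      refine ⟨hcl.1.subset (fun x hx => by
        simp only [coe_erase, Set.mem_diff] at hx
        exact hx.1), ?_⟩
      rw [card_erase_of_mem hpt, hcl.card_eq]
      omega
    · exact hA.1 t (fun x hx => by
        have := ht hx; rw [mem_insert] at this
        rcases this with h | h
        · exact absurd (h ▸ hx) hpt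
        · exact h) hcl
  have := hA.2.1 _ hfree
  rw [card_insert_of_notMem hp] at this
  omega

end Fixed



variable {V : Type} [Fintype V] [DecidableEq V] {H : SimpleGraph V} [DecidableRel H.Adj]
  {d : ℕ}

lemma isNClique_two_iff {b c : V} (hbc : b ≠ c) :
    H.IsNClique 2 {b, c} ↔ H.Adj b c := by
  constructor
  · intro h
    exact h.1 (by simp) (by simp) hbc
  · intro h
    constructor
    · intro x hx y hy hxy
      simp only [coe_insert, Set.mem_insert_iff, coe_singleton, Set.mem_singleton_iff] at hx hy
      rcases hx with rfl | rfl <;> rcases hy with rfl | rfl <;> first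
        | exact absurd rfl hxy | exact h | exact h.symm
    · rw [card_insert_of_notMem (by simp [hbc]), card_singleton]

lemma trAt_eq_pr {z : V} {B : Finset V} (hz : z ∈ B) : trAt H z B = pr H z B := by
  classical
  unfold trAt pr
  refine Finset.card_bij (fun t _ => t.erase z) ?_ ?_ ?_
  · intro t ht
    simp only [mem_filter, mem_powersetCard] at ht ⊢
    obtain ⟨⟨htB, hcard3⟩, hcl, hzt⟩ := ht
    refine ⟨⟨?_, by rw [card_erase_of_mem hzt, hcard3]⟩, ?_⟩
    · intro x hx
      rw [mem_erase] at hx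
      rw [mem_inter, SimpleGraph.mem_neighborFinset]
      exact ⟨hcl.1 (by simp [hzt]) (by simp [hx.2]) (Ne.symm hx.1), htB hx.2⟩
    · constructor
      · exact hcl.1.subset (fun x hx => by
          simp only [coe_erase, Set.mem_diff] at hx; exact hx.1)
      · rw [card_erase_of_mem hzt, hcl.card_eq]
  · intro t1 h1 t2 h2 heq
    simp only [mem_filter] at h1 h2
    have heq' : t1.erase z = t2.erase z := heq
    have e1 : t1 = insert z (t1.erase z) := (insert_erase h1.2.2).symm
    have e2 : t2 = insert z (t2.erase z) := (insert_erase h2.2.2).symm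
    rw [e1, e2, heq']
  · intro e he
    simp only [mem_filter, mem_powersetCard] at he
    obtain ⟨⟨heB, hcard2⟩, hecl⟩ := he
    have hze : z ∉ e := by
      intro hc
      have := heB hc
      rw [mem_inter, SimpleGraph.mem_neighborFinset] at this
      exact H.loopless.irrefl z this.1
    have hclall : H.IsClique (↑(insert z e) : Set V) := by
      intro x hx y hy hxy
      simp only [coe_insert, Set.mem_insert_iff, mem_coe] at hx hy
      rcases hx with rfl | hx <;> rcases hy with rfl | hy
      · exact absurd rfl hxy
      · exact (SimpleGraph.mem_neighborFinset H x y).mp (mem_of_mem_inter_left (heB hy))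
      · exact ((SimpleGraph.mem_neighborFinset H y x).mp
          (mem_of_mem_inter_left (heB hx))).symm
      · exact hecl.1 (by simp [hx]) (by simp [hy]) hxy
    refine ⟨insert z e, ?_, ?_⟩
    · simp only [mem_filter, mem_powersetCard]
      refine ⟨⟨?_, by rw [card_insert_of_notMem hze, hcard2]⟩,
        ⟨hclall, by rw [card_insert_of_notMem hze, hcard2]⟩, by simp⟩
      intro x hx
      rw [mem_insert] at hx
      rcases hx with rfl | hx
      · exact hz
      · exact (mem_inter.mp (heB hx)).2
    · show (insert z e).erase z = e
      exact erase_insert hze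

lemma tr_erase_add {z : V} {B : Finset V} (hz : z ∈ B) :
    tr H B = tr H (B.erase z) + trAt H z B := by
  classical
  unfold tr trAt
  rw [← card_union_of_disjoint]
  · congr 1
    ext t
    simp only [mem_union, mem_filter, mem_powersetCard]
    constructor
    · intro ⟨⟨htB, hc⟩, hcl⟩
      by_cases hzt : z ∈ t
      · exact Or.inr ⟨⟨htB, hc⟩, hcl, hzt⟩
      · exact Or.inl ⟨⟨fun x hx => mem_erase.mpr ⟨fun h => hzt (h ▸ hx), htB hx⟩, hc⟩, hcl⟩
    · rintro (⟨⟨htB, hc⟩, hcl⟩ | ⟨⟨htB, hc⟩, hcl, _⟩)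
      · exact ⟨⟨fun x hx => mem_of_mem_erase (htB hx), hc⟩, hcl⟩
      · exact ⟨⟨htB, hc⟩, hcl⟩
  · rw [Finset.disjoint_left]
    intro t ht1 ht2
    simp only [mem_filter, mem_powersetCard] at ht1 ht2
    exact (mem_erase.mp (ht1.1.1 ht2.2.2)).1 rfl

lemma tr_swap {a x : V} {B : Finset V} (ha : a ∈ B) (hx : x ∉ B) :
    tr H (insert x (B.erase a)) + trAt H a B
      = tr H B + trAt H x (insert x (B.erase a)) := by
  have h1 : tr H B = tr H (B.erase a) + trAt H a B := tr_erase_add ha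
  have hxmem : x ∈ insert x (B.erase a) := mem_insert_self _ _
  have h2 : tr H (insert x (B.erase a))
      = tr H ((insert x (B.erase a)).erase x) + trAt H x (insert x (B.erase a)) :=
    tr_erase_add hxmem
  rw [erase_insert (fun hc => hx (mem_of_mem_erase hc))] at h2
  omega

lemma pr_le_one {z : V} {B : Finset V} (h : (H.neighborFinset z ∩ B).card ≤ 2) :
    pr H z B ≤ 1 := by
  unfold pr
  calc _ ≤ ((H.neighborFinset z ∩ B).powersetCard 2).card := card_filter_le _ _
    _ = ((H.neighborFinset z ∩ B).card).choose 2 := card_powersetCard _ _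
    _ ≤ 1 := by interval_cases h' : (H.neighborFinset z ∩ B).card <;> simp

lemma pr_eq_one {z b c : V} {B : Finset V} (hbc : b ≠ c) (hadj : H.Adj b c)
    (h : H.neighborFinset z ∩ B = {b, c}) : pr H z B = 1 := by
  unfold pr
  rw [h]
  have hcard : ({b, c} : Finset V).card = 2 := by
    rw [card_insert_of_notMem (by simp [hbc]), card_singleton]
  have hps : (({b, c} : Finset V).powersetCard 2) = {{b, c}} := by
    rw [← hcard]; exact powersetCard_self _
  rw [hps, filter_singleton, if_pos ((isNClique_two_iff hbc).mpr hadj), card_singleton]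

lemma pr_pos_elim {z : V} {B : Finset V} (h : 1 ≤ pr H z B) :
    ∃ r s : V, r ≠ s ∧ H.Adj r s ∧ r ∈ H.neighborFinset z ∩ B ∧
      s ∈ H.neighborFinset z ∩ B := by
  unfold pr at h
  rw [Nat.one_le_iff_ne_zero, ← Nat.pos_iff_ne_zero, card_pos] at h
  obtain ⟨e, he⟩ := h
  simp only [mem_filter, mem_powersetCard] at he
  obtain ⟨⟨heB, hcard⟩, hcl⟩ := he
  obtain ⟨r, s, hrs, rfl⟩ := card_eq_two.mp hcard
  exact ⟨r, s, hrs, hcl.1 (by simp) (by simp) hrs, heB (by simp), heB (by simp)⟩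



variable {V : Type} [Fintype V] [DecidableEq V] {H : SimpleGraph V} [DecidableRel H.Adj]
  {d : ℕ}

lemma n2_eq_inter_compl (A : Finset V) (z : V) :
    n2 H A z = H.neighborFinset z ∩ Aᶜ := by
  ext x; simp [n2]

section Main

/-- facts about a triangle vertex `a` at an optimal partition -/
lemma vertexA (hd6 : 6 ≤ d) (hmax : ∀ v : V, H.degree v ≤ d)
    {A : Finset V} (hA : Opt H d A) {a b c : V} (ha : a ∉ A)
    (hb : b ∈ n2 H A a) (hc : c ∈ n2 H A a) (hbc : b ≠ c) :
    H.IsNClique (d-2) (n1 H A a) ∧ n2 H A a = {b, c} ∧ H.degree a = d := by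
  obtain ⟨C, hC1, hC2⟩ := exists_clique_nbhd hA ha
  have hCcard : C.card = d - 2 := hC2.card_eq
  have h2 : ({b, c} : Finset V) ⊆ n2 H A a := by
    intro y hy; rw [mem_insert, mem_singleton] at hy
    rcases hy with rfl | rfl <;> assumption
  have hbccard : ({b, c} : Finset V).card = 2 := by
    rw [card_insert_of_notMem (by simp [hbc]), card_singleton]
  have hn1 : d - 2 ≤ (n1 H A a).card := hCcard ▸ card_le_card hC1
  have hn2 : 2 ≤ (n2 H A a).card := hbccard ▸ card_le_card h2
  have hsum := n1_card_add_n2_card (H := H) A a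
  have hdeg := hmax a
  have e1 : (n1 H A a).card = d - 2 := by omega
  have e2 : (n2 H A a).card = 2 := by omega
  have hCeq : C = n1 H A a := eq_of_subset_of_card_le hC1 (by omega)
  have hbceq : ({b, c} : Finset V) = n2 H A a :=
    eq_of_subset_of_card_le h2 (by omega)
  exact ⟨hCeq ▸ hC2, hbceq.symm, by omega⟩

/-- swapping a triangle vertex `a` with a member `x` of its clique keeps freeness -/
lemma free_swap (hd6 : 6 ≤ d) {A : Finset V} (hfree : free H d A) {a x : V} (ha : a ∉ A)
    (hcl : H.IsNClique (d-2) (n1 H A a)) (hx : x ∈ n1 H A a) :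
    free H d (insert a (A.erase x)) := by
  intro t ht hclt
  by_cases hat : a ∈ t
  · have hsub : t.erase a ⊆ (n1 H A a).erase x := by
      intro y hy
      rw [mem_erase] at hy
      have hyA : y ∈ A.erase x := by
        have := ht hy.2; rw [mem_insert] at this; tauto
      rw [mem_erase] at hyA ⊢
      refine ⟨hyA.1, ?_⟩
      rw [mem_n1]
      exact ⟨hclt.1 (by simp [hat]) (by simp [hy.2]) (Ne.symm hy.1), hyA.2⟩
    have h1 : (t.erase a).card = t.card - 1 := card_erase_of_mem hat
    have h1' : t.card = d - 1 := hclt.card_eq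
    have h2 : ((n1 H A a).erase x).card = (n1 H A a).card - 1 := card_erase_of_mem hx
    have h2' : (n1 H A a).card = d - 2 := hcl.card_eq
    have := card_le_card hsub
    omega
  · refine hfree t (fun y hy => ?_) hclt
    have := ht hy; rw [mem_insert] at this
    rcases this with rfl | h
    · exact absurd hy hat
    · exact mem_of_mem_erase h

lemma compl_swap {A : Finset V} {a x : V} (ha : a ∉ A) (hx : x ∈ A) :
    (insert a (A.erase x))ᶜ = insert x (Aᶜ.erase a) := by
  have hax : a ≠ x := fun h => ha (h ▸ hx)
  ext y
  simp only [mem_compl, mem_insert, mem_erase, mem_compl]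
  by_cases hyx : y = x <;> by_cases hya : y = a <;>
    simp_all [hax, ha, hx] <;> tauto

/-- the big member lemma: facts about each member `x` of the clique of a triangle vertex -/
lemma memberX (hd6 : 6 ≤ d) (hmax : ∀ v : V, H.degree v ≤ d)
    {A : Finset V} (hA : Opt H d A) {a b c : V} (ha : a ∉ A)
    (hb : b ∈ n2 H A a) (hc : c ∈ n2 H A a) (hbc : b ≠ c) (hadj : H.Adj b c)
    {x : V} (hx : x ∈ n1 H A a) :
    Opt H d (insert a (A.erase x)) ∧
    n1 H A x = (n1 H A a).erase x ∧
    H.degree x = d ∧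
    ∃ r s : V, r ≠ s ∧ H.Adj r s ∧ n2 H A x = {a, r, s} ∧ a ∉ ({r, s} : Finset V) := by
  obtain ⟨hcl, hn2a, hdega⟩ := vertexA hd6 hmax hA ha hb hc hbc
  have hxA : x ∈ A := (mem_n1.mp hx).2
  have hax : H.Adj a x := (mem_n1.mp hx).1
  have haAc : a ∈ Aᶜ := mem_compl.mpr ha
  have hxAc : x ∉ Aᶜ := by rw [mem_compl]; exact fun h => h hxA
  set A' := insert a (A.erase x) with hA'
  have hfree' : free H d A' := free_swap hd6 hA.1 ha hcl hx
  have hcard' : A'.card = A.card := by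
    rw [hA', card_insert_of_notMem (fun h => ha (mem_of_mem_erase h)),
      card_erase_of_mem hxA]
    have : 0 < A.card := card_pos.mpr ⟨x, hxA⟩
    omega
  have hcompl : A'ᶜ = insert x (Aᶜ.erase a) := compl_swap ha hxA
  -- triangle counting
  have hswap := tr_swap (H := H) haAc hxAc
  have htrAta : trAt H a Aᶜ = 1 := by
    rw [trAt_eq_pr haAc]
    exact pr_eq_one hbc hadj (by rw [← n2_eq_inter_compl]; exact hn2a)
  have hmin : tr H Aᶜ ≤ tr H A'ᶜ := hA.2.2 A' hfree' hcard'
  rw [hcompl] at hmin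
  have hpos : 1 ≤ trAt H x (insert x (Aᶜ.erase a)) := by omega
  rw [trAt_eq_pr (mem_insert_self _ _)] at hpos
  obtain ⟨r, s, hrs, hrsadj, hrmem, hsmem⟩ := pr_pos_elim hpos
  -- identify the neighborhood of x in the new complement
  have hnbx : H.neighborFinset x ∩ insert x (Aᶜ.erase a) = (n2 H A x).erase a := by
    ext y
    simp only [mem_inter, SimpleGraph.mem_neighborFinset, mem_insert, mem_erase, mem_compl,
      mem_n2]
    constructor
    · rintro ⟨hxy, (rfl | ⟨hya, hyA⟩)⟩
      · exact absurd hxy (H.loopless.irrefl _)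
      · exact ⟨hya, hxy, hyA⟩
    · rintro ⟨hya, hxy, hyA⟩
      exact ⟨hxy, Or.inr ⟨hya, hyA⟩⟩
  rw [hnbx] at hrmem hsmem
  -- degree counting for x
  have hsubn1 : (n1 H A a).erase x ⊆ n1 H A x := by
    intro y hy
    rw [mem_erase] at hy
    rw [mem_n1]
    exact ⟨hcl.1 (by simpa using hx) (by simpa using hy.2) (Ne.symm hy.1),
      (mem_n1.mp hy.2).2⟩
  have hsubn2 : ({a, r, s} : Finset V) ⊆ n2 H A x := by
    intro y hy
    simp only [mem_insert, mem_singleton] at hy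
    rcases hy with rfl | rfl | rfl
    · rw [mem_n2]; exact ⟨hax.symm, ha⟩
    · exact mem_of_mem_erase hrmem
    · exact mem_of_mem_erase hsmem
  have hcard_ars : ({a, r, s} : Finset V).card = 3 := by
    have har : r ≠ a := (mem_erase.mp hrmem).1
    have has : s ≠ a := (mem_erase.mp hsmem).1
    rw [card_insert_of_notMem (by simp [har.symm, has.symm]),
      card_insert_of_notMem (by simp [hrs]), card_singleton]
  have h1le : d - 3 ≤ (n1 H A x).card := by
    have := card_le_card hsubn1
    rw [card_erase_of_mem hx, hcl.card_eq] at this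
    omega
  have h2le : 3 ≤ (n2 H A x).card := hcard_ars ▸ card_le_card hsubn2
  have hsum := n1_card_add_n2_card (H := H) A x
  have hdegx := hmax x
  have e1 : (n1 H A x).card = d - 3 := by omega
  have e2 : (n2 H A x).card = 3 := by omega
  have hn1x : n1 H A x = (n1 H A a).erase x := by
    refine (eq_of_subset_of_card_le hsubn1 ?_).symm
    rw [card_erase_of_mem hx, hcl.card_eq, e1]
    omega
  have hn2x : n2 H A x = {a, r, s} := by
    refine (eq_of_subset_of_card_le hsubn2 (by omega)).symm
  have hanx : a ∈ n2 H A x := hsubn2 (by simp)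
  -- the new partition is optimal too
  have htrx : trAt H x (insert x (Aᶜ.erase a)) ≤ 1 := by
    rw [trAt_eq_pr (mem_insert_self _ _)]
    refine pr_le_one ?_
    rw [hnbx, card_erase_of_mem hanx, e2]
  rw [trAt_eq_pr (mem_insert_self _ _)] at hswap htrx
  have hOpt' : Opt H d A' := by
    refine ⟨hfree', fun B hB => hcard' ▸ hA.2.1 B hB, fun B hB hBc => ?_⟩
    have h1 : tr H A'ᶜ = tr H Aᶜ := by rw [hcompl]; omega
    rw [h1]
    exact hA.2.2 B hB (by omega)
  have har : r ≠ a := (mem_erase.mp hrmem).1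
  have has : s ≠ a := (mem_erase.mp hsmem).1
  exact ⟨hOpt', hn1x, by omega, r, s, hrs, hrsadj, hn2x,
    by simp [Ne.symm har, Ne.symm has]⟩

end Main


variable {V : Type} [Fintype V] [DecidableEq V] {H : SimpleGraph V} [DecidableRel H.Adj]
  {d : ℕ}

section Main

/-- no `d`-clique helper : two adjacent common dominators of a `(d-2)`-clique -/
lemma two_dominators (hd6 : 6 ≤ d) (hno : ∀ s : Finset V, ¬ H.IsNClique d s)
    {C : Finset V} (hC : H.IsNClique (d-2) C) {u v : V} (huv : H.Adj u v)
    (hu : u ∉ C) (hv : v ∉ C) (hudom : ∀ y ∈ C, H.Adj u y)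
    (hvdom : ∀ y ∈ C, H.Adj v y) : False := by
  have h1 : H.IsNClique (d-2+1) (insert u C) := hC.insert hudom
  have h2 : H.IsNClique (d-2+1+1) (insert v (insert u C)) := by
    refine h1.insert ?_
    intro y hy
    rw [mem_insert] at hy
    rcases hy with rfl | hy
    · exact huv.symm
    · exact hvdom y hy
  have heq : d - 2 + 1 + 1 = d := by omega
  rw [heq] at h2
  exact hno _ h2

/-- a pair vertex is not adjacent to the triangle vertex -/
lemma pair_not_adj (hd6 : 6 ≤ d) (hmax : ∀ v : V, H.degree v ≤ d)
    (hno : ∀ s : Finset V, ¬ H.IsNClique d s)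
    {A : Finset V} (hA : Opt H d A) {a b c : V} (ha : a ∉ A)
    (hb : b ∈ n2 H A a) (hc : c ∈ n2 H A a) (hbc : b ≠ c) (hadj : H.Adj b c)
    {x : V} (hx : x ∈ n1 H A a) {r : V} (hr : r ∈ n2 H A x) (hra : r ≠ a) :
    ¬ H.Adj a r := by
  intro haradj
  obtain ⟨hcl, hn2a, _⟩ := vertexA hd6 hmax hA ha hb hc hbc
  have hrn2a : r ∈ n2 H A a := by
    rw [mem_n2]
    exact ⟨haradj, (mem_n2.mp hr).2⟩
  rw [hn2a, mem_insert, mem_singleton] at hrn2a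
  -- wlog machinery: handle both cases symmetrically
  have key : ∀ b' c' : V, b' ∈ n2 H A a → c' ∈ n2 H A a → b' ≠ c' → H.Adj b' c' →
      r = b' → False := by
    intro b' c' hb' hc' hbc' hadj' hrb'
    subst hrb'
    -- r is a triangle vertex with partners a, c'
    have hrA : r ∉ A := (mem_n2.mp hr).2
    have han2r : a ∈ n2 H A r := by
      rw [mem_n2]; exact ⟨haradj.symm, ha⟩
    have hcn2r : c' ∈ n2 H A r := by
      rw [mem_n2]; exact ⟨hadj', (mem_n2.mp hc').2⟩
    have hac' : a ≠ c' := by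
      intro h; subst h; exact (H.loopless.irrefl a) ((mem_n2.mp hc').1)
    have hadjac : H.Adj a c' := (mem_n2.mp hc').1
    -- x is in r's clique
    have hxr : x ∈ n1 H A r := by
      rw [mem_n1]
      exact ⟨((mem_n2.mp hr).1).symm, (mem_n1.mp hx).2⟩
    have h1 := (memberX hd6 hmax hA ha hb hc hbc hadj hx).2.1
    have h2 := (memberX hd6 hmax hA hrA han2r hcn2r hac' hadjac hxr).2.1
    -- n1 A a = n1 A r
    have heq : n1 H A a = n1 H A r := by
      have e1 : insert x ((n1 H A a).erase x) = n1 H A a := insert_erase hx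
      have e2 : insert x ((n1 H A r).erase x) = n1 H A r := insert_erase hxr
      rw [← e1, ← e2, ← h1, ← h2]
    obtain ⟨hcla, _, _⟩ := vertexA hd6 hmax hA ha hb hc hbc
    refine two_dominators hd6 hno hcla haradj ?_ ?_ ?_ ?_
    · intro h; exact ha (mem_n1.mp h).2
    · intro h; exact hrA (mem_n1.mp h).2
    · intro y hy; exact (mem_n1.mp hy).1
    · intro y hy; rw [heq] at hy; exact (mem_n1.mp hy).1
  rcases hrn2a with rfl | rfl
  · exact key r c hb hc hbc hadj rfl
  · exact key r b hc hb (Ne.symm hbc) hadj.symm rfl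




lemma n12_congr {A B : Finset V} {t : V} (h : ∀ y, H.Adj t y → (y ∈ A ↔ y ∈ B)) :
    n1 H A t = n1 H B t ∧ n2 H A t = n2 H B t := by
  constructor <;> ext y <;>
    simp only [n1, n2, mem_inter, mem_sdiff, SimpleGraph.mem_neighborFinset] <;>
    constructor <;> rintro ⟨h1, h2⟩ <;> exact ⟨h1, by rw [h y h1] at * <;> tauto⟩


lemma mem_swap_iff {A : Finset V} {a x y : V} (hya : y ≠ a) (hyx : y ≠ x) :
    y ∈ insert a (A.erase x) ↔ y ∈ A := by
  simp [hya, hyx]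



/-- L2: full description of a pair vertex `r` attached at `x` -/
lemma pairX (hd6 : 6 ≤ d) (hmax : ∀ v : V, H.degree v ≤ d)
    (hno : ∀ s : Finset V, ¬ H.IsNClique d s)
    {A : Finset V} (hA : Opt H d A) {a b c : V} (ha : a ∉ A)
    (hb : b ∈ n2 H A a) (hc : c ∈ n2 H A a) (hbc : b ≠ c) (hadj : H.Adj b c)
    {x : V} (hx : x ∈ n1 H A a) {r s : V}
    (hn2x : n2 H A x = {a, r, s}) (hrs : r ≠ s) (hrsadj : H.Adj r s)
    (har : r ≠ a) (has : s ≠ a) :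
    r ∉ A ∧ ¬ H.Adj a r ∧
    H.IsNClique (d-2) (n1 H (insert a (A.erase x)) r) ∧
    n1 H (insert a (A.erase x)) r ⊆ A.erase x ∧
    x ∉ n1 H (insert a (A.erase x)) r ∧
    n1 H A r = insert x (n1 H (insert a (A.erase x)) r) ∧
    n2 H A r = {s} ∧
    H.degree r = d ∧
    (n1 H (insert a (A.erase x)) r) ∩ n1 H A a = ∅ ∧
    (∀ t ∈ n1 H (insert a (A.erase x)) r, n1 H A t = (n1 H (insert a (A.erase x)) r).erase t) := by
  have hxA : x ∈ A := (mem_n1.mp hx).2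
  have hxadj : H.Adj a x := (mem_n1.mp hx).1
  have hxa : x ≠ a := fun h => ha (h ▸ hxA)
  have hrn2x : r ∈ n2 H A x := by rw [hn2x]; simp
  have hsn2x : s ∈ n2 H A x := by rw [hn2x]; simp
  have hrA : r ∉ A := (mem_n2.mp hrn2x).2
  have hsA : s ∉ A := (mem_n2.mp hsn2x).2
  have hxr : H.Adj x r := (mem_n2.mp hrn2x).1
  have hxs : H.Adj x s := (mem_n2.mp hsn2x).1
  have hnar : ¬ H.Adj a r := pair_not_adj hd6 hmax hno hA ha hb hc hbc hadj hx hrn2x har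
  set A' := insert a (A.erase x) with hA'def
  have hOpt' : Opt H d A' := (memberX hd6 hmax hA ha hb hc hbc hadj hx).1
  have hrA' : r ∉ A' := by
    rw [hA'def, mem_insert]
    push_neg
    exact ⟨har, fun h => hrA (mem_of_mem_erase h)⟩
  have hsA' : s ∉ A' := by
    rw [hA'def, mem_insert]
    push_neg
    exact ⟨has, fun h => hsA (mem_of_mem_erase h)⟩
  have hxA' : x ∉ A' := by
    rw [hA'def, mem_insert]
    push_neg
    exact ⟨hxa, fun h => (mem_erase.mp h).1 rfl⟩
  have hxn2r : x ∈ n2 H A' r := mem_n2.mpr ⟨hxr.symm, hxA'⟩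
  have hsn2r : s ∈ n2 H A' r := mem_n2.mpr ⟨hrsadj, hsA'⟩
  have hxsne : x ≠ s := fun h => hsA (h ▸ hxA)
  obtain ⟨hclr, hn2r', hdegr⟩ := vertexA hd6 hmax hOpt' hrA' hxn2r hsn2r hxsne
  set Cr := n1 H A' r with hCrdef
  -- a is not in Cr since a is not adjacent to r
  have haCr : a ∉ Cr := fun h => hnar ((mem_n1.mp h).1).symm
  have hCrsub : Cr ⊆ A.erase x := by
    intro y hy
    have := (mem_n1.mp hy).2
    rw [hA'def, mem_insert] at this
    rcases this with rfl | h
    · exact absurd hy haCr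
    · exact h
  have hxCr : x ∉ Cr := fun h => (mem_erase.mp (hCrsub h)).1 rfl
  -- n1 A r = insert x Cr
  have hn1Ar : n1 H A r = insert x Cr := by
    ext y
    rw [mem_n1, mem_insert]
    constructor
    · rintro ⟨hadjry, hyA⟩
      by_cases hyx : y = x
      · exact Or.inl hyx
      · refine Or.inr (mem_n1.mpr ⟨hadjry, ?_⟩)
        rw [hA'def, mem_insert]
        exact Or.inr (mem_erase.mpr ⟨hyx, hyA⟩)
    · rintro (rfl | hy)
      · exact ⟨hxr.symm, hxA⟩
      · exact ⟨(mem_n1.mp hy).1, mem_of_mem_erase (hCrsub hy)⟩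
  -- n2 A r = {s}
  have hn2Ar : n2 H A r = {s} := by
    ext y
    rw [mem_n2, mem_singleton]
    constructor
    · rintro ⟨hadjry, hyA⟩
      have hyA' : y ∉ A' ∨ y ∈ A' := Or.symm (em _)
      by_cases hy' : y ∈ A'
      · exact absurd (hCrsub (mem_n1.mpr ⟨hadjry, hy'⟩)) (fun h => hyA (mem_of_mem_erase h))
      · have : y ∈ n2 H A' r := mem_n2.mpr ⟨hadjry, hy'⟩
        rw [hn2r', mem_insert, mem_singleton] at this
        rcases this with rfl | rfl
        · exact absurd hxA hyA
        · rfl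
    · rintro rfl
      exact ⟨hrsadj, hsA⟩
  -- disjointness from the clique of a
  have hdisj : Cr ∩ n1 H A a = ∅ := by
    rw [eq_empty_iff_forall_notMem]
    intro t ht
    rw [mem_inter] at ht
    obtain ⟨htCr, htn1a⟩ := ht
    have h1 := (memberX hd6 hmax hA ha hb hc hbc hadj htn1a).2.1
    have h2 := (memberX hd6 hmax hOpt' hrA' hxn2r hsn2r hxsne hxs htCr).2.1
    have hta : H.Adj a t := (mem_n1.mp htn1a).1
    have haA' : a ∈ A' := mem_insert_self _ _
    have : a ∈ n1 H A' t := mem_n1.mpr ⟨hta.symm, haA'⟩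
    rw [h2] at this
    exact ha (mem_of_mem_erase (hCrsub (mem_of_mem_erase this)))
  -- closedness at A
  have hclosed : ∀ t ∈ Cr, n1 H A t = Cr.erase t := by
    intro t htCr
    have h2 := (memberX hd6 hmax hOpt' hrA' hxn2r hsn2r hxsne hxs htCr).2.1
    have htA : t ∈ A := mem_of_mem_erase (hCrsub htCr)
    -- t is not adjacent to x
    have hntx : ¬ H.Adj t x := by
      intro hadjtx
      have : t ∈ H.neighborFinset x := by
        rw [SimpleGraph.mem_neighborFinset]; exact hadjtx.symm
      have ht2 : t ∈ n1 H A x ∨ t ∈ n2 H A x := by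
        rcases em (t ∈ A) with h | h
        · exact Or.inl (mem_n1.mpr ⟨hadjtx.symm, h⟩)
        · exact Or.inr (mem_n2.mpr ⟨hadjtx.symm, h⟩)
      rcases ht2 with h | h
      · rw [(memberX hd6 hmax hA ha hb hc hbc hadj hx).2.1] at h
        have : t ∈ Cr ∩ n1 H A a := mem_inter.mpr ⟨htCr, mem_of_mem_erase h⟩
        rw [hdisj] at this
        exact notMem_empty _ this
      · rw [hn2x] at h
        simp only [mem_insert, mem_singleton] at h
        rcases h with rfl | rfl | rfl
        · exact ha htA
        · exact hrA htA
        · exact hsA htA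
    -- t is not adjacent to a
    have hnta : ¬ H.Adj t a := by
      intro hadjta
      have : a ∈ n1 H A' t := mem_n1.mpr ⟨hadjta, mem_insert_self _ _⟩
      rw [h2] at this
      exact haCr (mem_of_mem_erase this)
    have := n12_congr (H := H) (A := A) (B := A') (t := t) (fun y hy => by
      have hya : y ≠ a := fun h => hnta (h ▸ hy)
      have hyx : y ≠ x := fun h => hntx (h ▸ hy)
      exact (mem_swap_iff hya hyx).symm)
    rw [this.1, h2]
  exact ⟨hrA, hnar, hclr, hCrsub, hxCr, hn1Ar, hn2Ar, hdegr, hdisj, hclosed⟩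

end Main


variable {V : Type} [Fintype V] [DecidableEq V] {H : SimpleGraph V} [DecidableRel H.Adj]
  {d : ℕ}

section Glob

variable (H) (d)
variable (P : Finset V)

/-- `x` lies in closed class `C` of the partition `P` -/
def MemC (x : V) (C : Finset V) : Prop :=
  x ∈ C ∧ C ⊆ P ∧ H.IsNClique (d-2) C ∧ ∀ y ∈ C, n1 H P y = C.erase y

/-- triangle-vertex description -/
def DescTri (v b c : V) : Prop :=
  v ∉ P ∧ b ∉ P ∧ c ∉ P ∧ b ≠ c ∧ H.Adj b c ∧ H.Adj v b ∧ H.Adj v c ∧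
  n2 H P v = {b, c} ∧ H.IsNClique (d-2) (n1 H P v) ∧
  (∀ y ∈ n1 H P v, n1 H P y = (n1 H P v).erase y)

/-- pair-vertex description: `r` with partner `s`, attached at `x`, dominating `C` -/
def DescPair (r : V) (C : Finset V) (x s : V) : Prop :=
  r ∉ P ∧ s ∉ P ∧ x ∈ P ∧ r ≠ s ∧ H.Adj r s ∧ H.Adj x r ∧ H.Adj x s ∧
  C ⊆ P ∧ x ∉ C ∧ H.IsNClique (d-2) C ∧
  n1 H P r = insert x C ∧ n2 H P r = {s} ∧
  (∀ y ∈ C, n1 H P y = C.erase y)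

/-- activation witness for the pair `(r,s)` attached at `x` -/
def Wit (r s x : V) (Cr Cs : Finset V) : Prop :=
  ∃ Q : Finset V, Opt H d Q ∧ r ∉ Q ∧ s ∉ Q ∧ x ∉ Q ∧ Cr ⊆ Q ∧ Cs ⊆ Q ∧
    (∀ f ∈ P, f ∉ Q → ∃ Cf, MemC H d P f Cf)

/-- full member data for `x`: class `C`, dominator `p`, pair `(r,s)` -/
def MemCore (x : V) (C : Finset V) (p r s : V) (Cr Cs : Finset V) : Prop :=
  MemC H d P x C ∧ n2 H P x = {p, r, s} ∧ (∀ y ∈ C, H.Adj p y) ∧ p ∉ P ∧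
  DescPair H d P r Cr x s ∧ DescPair H d P s Cs x r ∧ Wit H d P r s x Cr Cs ∧
  Cr ∩ C = ∅ ∧ Cs ∩ C = ∅

inductive Good : V → Prop where
  | triv (v b c : V) : DescTri H d P v b c → Good v
  | memv (x : V) (C : Finset V) (p r s : V) (Cr Cs : Finset V) :
      MemCore H d P x C p r s Cr Cs → Good p → Good x
  | pairv (x : V) (C : Finset V) (p r s : V) (Cr Cs : Finset V) :
      MemCore H d P x C p r s Cr Cs → Good p → Good r

variable {H d P}

lemma wit_swap {r s x : V} {Cr Cs : Finset V} (h : Wit H d P r s x Cr Cs) :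
    Wit H d P s r x Cs Cr := by
  obtain ⟨Q, h1, h2, h3, h4, h5, h6, h7⟩ := h
  exact ⟨Q, h1, h3, h2, h4, h6, h5, h7⟩

lemma memcore_swap {x : V} {C : Finset V} {p r s : V} {Cr Cs : Finset V}
    (h : MemCore H d P x C p r s Cr Cs) : MemCore H d P x C p s r Cs Cr := by
  obtain ⟨h1, h2, h3, h3', h4, h5, h6, h7, h8⟩ := h
  refine ⟨h1, ?_, h3, h3', h5, h4, wit_swap h6, h8, h7⟩
  rw [h2]
  ext y; simp only [mem_insert, mem_singleton]; tauto

/-- build a triangle-vertex description from a triangle outside an optimal set -/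
lemma mk_DescTri (hd6 : 6 ≤ d) (hmax : ∀ v : V, H.degree v ≤ d)
    (hP : Opt H d P) {u v w : V} (hu : u ∉ P) (hv : v ∉ P) (hw : w ∉ P)
    (hvw : v ≠ w) (huv : H.Adj u v) (huw : H.Adj u w) (hadj : H.Adj v w) :
    DescTri H d P u v w := by
  have hbv : v ∈ n2 H P u := mem_n2.mpr ⟨huv, hv⟩
  have hbw : w ∈ n2 H P u := mem_n2.mpr ⟨huw, hw⟩
  obtain ⟨hcl, hn2, _⟩ := vertexA hd6 hmax hP hu hbv hbw hvw
  refine ⟨hu, hv, hw, hvw, hadj, huv, huw, hn2, hcl, ?_⟩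
  intro y hy
  exact (memberX hd6 hmax hP hu hbv hbw hvw hadj hy).2.1


lemma nb_decomp (A : Finset V) (z : V) :
    H.neighborFinset z = n1 H A z ∪ n2 H A z := by
  ext y; simp only [n1, n2, mem_union, mem_inter, mem_sdiff]; tauto

/-- T1 : candidate pair vertices are outside `P` -/
lemma pair_not_in_P {Q : Finset V} {a t z : V} {C : Finset V}
    (haP : a ∉ P) (htC : t ∈ C) (hCsubP : C ⊆ P) (hCsubQ : C ⊆ Q)
    (hCcl : ∀ y ∈ C, n1 H P y = C.erase y)
    (hzQ : z ∉ Q) (hadjtz : H.Adj t z)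
    (hagree : ∀ f ∈ P, f ∉ Q → ∃ Cf, MemC H d P f Cf) : z ∉ P := by
  intro hzP
  obtain ⟨Cf, hf1, hf2, hf3, hf4⟩ := hagree z hzP hzQ
  have htc : t ∈ n1 H P z := mem_n1.mpr ⟨hadjtz.symm, hCsubP htC⟩
  rw [hf4 z hf1] at htc
  have htCf : t ∈ Cf := mem_of_mem_erase htc
  have h1 : n1 H P t = Cf.erase t := hf4 t htCf
  have h2 : n1 H P t = C.erase t := hCcl t htC
  have hCfC : Cf = C := by
    have := h1.symm.trans h2
    rw [← insert_erase htCf, ← insert_erase htC, this]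
  exact hzQ (hCsubQ (hCfC ▸ hf1))

/-- T3–T6 : a new pair vertex `z` (with partner `z'`, attach `t`) gets a `DescPair` at `P`. -/
lemma prodPair (hd6 : 6 ≤ d) (hP : Opt H d P)
    {Q : Finset V} {a t z z' : V} {C C₁ : Finset V}
    (haP : a ∉ P) (htC : t ∈ C) (htQ : t ∈ Q) (hCsubP : C ⊆ P)
    (hn1t : n1 H Q t = C.erase t) (hn2t : n2 H Q t = {a, z, z'})
    (hzQ : z ∉ Q) (hzz' : z ≠ z') (hadjzz' : H.Adj z z')
    (hzP : z ∉ P) (hz'P : z' ∉ P)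
    (hclC₁ : H.IsNClique (d-2) C₁) (htC₁ : t ∉ C₁) (hn1z : n1 H Q z = insert t C₁)
    (hn2z : n2 H Q z = {z'}) (hdisj : C₁ ∩ C = ∅)
    (hclosedQ : ∀ w ∈ C₁, n1 H Q w = C₁.erase w)
    (hagree : ∀ f ∈ P, f ∉ Q → ∃ Cf, MemC H d P f Cf) :
    DescPair H d P z C₁ t z' ∧ C₁ ⊆ P := by
  have htP : t ∈ P := hCsubP htC
  have hadjtz : H.Adj t z := by
    have : z ∈ n2 H Q t := by rw [hn2t]; simp
    exact (mem_n2.mp this).1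
  have hadjtz' : H.Adj t z' := by
    have : z' ∈ n2 H Q t := by rw [hn2t]; simp
    exact (mem_n2.mp this).1
  have hz'Q : z' ∉ Q := by
    have : z' ∈ n2 H Q z := by rw [hn2z]; simp
    exact (mem_n2.mp this).2
  have hC₁Q : C₁ ⊆ Q := by
    intro u hu
    exact (mem_n1.mp (by rw [hn1z]; exact mem_insert_of_mem hu : u ∈ n1 H Q z)).2
  have hnbz : H.neighborFinset z = insert t C₁ ∪ {z'} := by
    rw [nb_decomp Q z, hn1z, hn2z]
  have hnbt : H.neighborFinset t = C.erase t ∪ {a, z, z'} := by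
    rw [nb_decomp Q t, hn1t, hn2t]
  have hzC₁ : z ∉ C₁ := by
    intro h
    have : z ∈ n1 H Q z := by rw [hn1z]; exact mem_insert_of_mem h
    exact (H.loopless.irrefl z) (mem_n1.mp this).1
  -- T3 : C₁ ⊆ P using maximality of P
  have hC₁P : C₁ ⊆ P := by
    by_contra hcon
    obtain ⟨y₀, hy₀C, hy₀P⟩ := not_subset.mp hcon
    obtain ⟨D, hD1, hD2⟩ := exists_clique_nbhd hP hzP
    have hDsub : D ⊆ insert t (C₁ ∩ P) := by
      intro y hy
      obtain ⟨hadjzy, hyP⟩ := mem_n1.mp (hD1 hy)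
      have : y ∈ insert t C₁ ∪ {z'} := by
        rw [← hnbz, SimpleGraph.mem_neighborFinset]; exact hadjzy
      rw [mem_union, mem_insert, mem_singleton] at this
      rcases this with (rfl | h) | rfl
      · exact mem_insert_self _ _
      · exact mem_insert_of_mem (mem_inter.mpr ⟨h, hyP⟩)
      · exact absurd hyP hz'P
    have hcard1 : (C₁ ∩ P).card ≤ d - 3 := by
      have hsub : C₁ ∩ P ⊆ C₁.erase y₀ := by
        intro y hy
        rw [mem_erase]
        exact ⟨fun h => hy₀P (h ▸ (mem_inter.mp hy).2), (mem_inter.mp hy).1⟩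
      have := card_le_card hsub
      have h2 : (C₁.erase y₀).card = C₁.card - 1 := card_erase_of_mem hy₀C
      have h3 : C₁.card = d - 2 := hclC₁.card_eq
      omega
    have hcard2 : (insert t (C₁ ∩ P)).card ≤ d - 2 := by
      have := card_insert_le t (C₁ ∩ P)
      omega
    have hDeq : D = insert t (C₁ ∩ P) := by
      refine eq_of_subset_of_card_le hDsub ?_
      rw [hD2.card_eq]; omega
    have hne : (C₁ ∩ P).Nonempty := by
      rw [← card_pos]
      have h1 : D.card = d - 2 := hD2.card_eq
      have h2 := card_insert_le t (C₁ ∩ P)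
      rw [hDeq] at h1
      omega
    obtain ⟨w, hw⟩ := hne
    have hwD : w ∈ D := hDeq ▸ mem_insert_of_mem hw
    have htD : t ∈ D := hDeq ▸ mem_insert_self _ _
    have hwt : w ≠ t := fun h => htC₁ (h ▸ (mem_inter.mp hw).1)
    have hadjtw : H.Adj t w := hD2.1 (by simp [htD]) (by simp [hwD]) (Ne.symm hwt)
    have : w ∈ C.erase t ∪ {a, z, z'} := by
      rw [← hnbt, SimpleGraph.mem_neighborFinset]; exact hadjtw
    rw [mem_union, mem_insert, mem_insert, mem_singleton] at this
    rcases this with h | rfl | rfl | rfl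
    · have : w ∈ C₁ ∩ C := mem_inter.mpr ⟨(mem_inter.mp hw).1, mem_of_mem_erase h⟩
      rw [hdisj] at this
      exact notMem_empty _ this
    · exact haP (mem_inter.mp hw).2
    · exact hzC₁ (mem_inter.mp hw).1
    · exact hz'P (mem_inter.mp hw).2
  -- T4 : transfer of z's neighborhoods
  have hzagree : ∀ y, H.Adj z y → (y ∈ P ↔ y ∈ Q) := by
    intro y hy
    have hynb : y ∈ insert t C₁ ∪ {z'} := by
      rw [← hnbz, SimpleGraph.mem_neighborFinset]; exact hy
    rw [mem_union, mem_insert, mem_singleton] at hynb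
    rcases hynb with (rfl | h) | rfl
    · exact ⟨fun _ => htQ, fun _ => htP⟩
    · exact ⟨fun _ => hC₁Q h, fun _ => hC₁P h⟩
    · exact ⟨fun hp => absurd hp hz'P, fun hq => absurd hq hz'Q⟩
  obtain ⟨hn1Pz, hn2Pz⟩ := n12_congr hzagree
  rw [hn1z] at hn1Pz
  rw [hn2z] at hn2Pz
  -- T5 : closedness of C₁ at P
  have hclosedP : ∀ w ∈ C₁, n1 H P w = C₁.erase w := by
    intro w hwC
    have hagreew : ∀ y, H.Adj w y → (y ∈ P ↔ y ∈ Q) := by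
      intro y hy
      constructor
      · intro hyP
        by_contra hyQ
        obtain ⟨Cf, hf1, hf2, hf3, hf4⟩ := hagree y hyP hyQ
        have hwCf : w ∈ Cf := by
          have : w ∈ n1 H P y := mem_n1.mpr ⟨hy.symm, hC₁P hwC⟩
          rw [hf4 y hf1] at this
          exact mem_of_mem_erase this
        have hsub : C₁.erase w ⊆ Cf.erase w := by
          intro u hu
          have huC : u ∈ C₁ := mem_of_mem_erase hu
          have hadjwu : H.Adj w u :=
            hclC₁.1 (by simp [hwC]) (by simp [huC]) (Ne.symm (mem_erase.mp hu).1)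
          have : u ∈ n1 H P w := mem_n1.mpr ⟨hadjwu, hC₁P huC⟩
          rw [hf4 w hwCf] at this
          exact this
        have hCeq : C₁ = Cf := by
          have hcards : (Cf.erase w).card ≤ (C₁.erase w).card := by
            rw [card_erase_of_mem hwCf, card_erase_of_mem hwC, hclC₁.card_eq, hf3.card_eq]
          have := eq_of_subset_of_card_le hsub hcards
          rw [← insert_erase hwC, ← insert_erase hwCf, this]
        exact hyQ (hC₁Q (hCeq ▸ hf1))
      · intro hyQ
        have : y ∈ n1 H Q w := mem_n1.mpr ⟨hy, hyQ⟩
        rw [hclosedQ w hwC] at this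
        exact hC₁P (mem_of_mem_erase this)
    exact ((n12_congr hagreew).1).trans (hclosedQ w hwC)
  exact ⟨⟨hzP, hz'P, htP, hzz', hadjzz', hadjtz, hadjtz', hC₁P, htC₁, hclC₁,
    hn1Pz, hn2Pz, hclosedP⟩, hC₁P⟩

lemma triple_comm (a z₁ z₂ : V) : ({a, z₁, z₂} : Finset V) = {a, z₂, z₁} := by
  ext y; simp only [mem_insert, mem_singleton]; tauto

/-- the production lemma : activating a triangle vertex `a` at a witness `Q`
    fully types all members of its clique at `P`. -/
lemma production (hd6 : 6 ≤ d) (hmax : ∀ v : V, H.degree v ≤ d)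
    (hno : ∀ s : Finset V, ¬ H.IsNClique d s) (hP : Opt H d P)
    {Q : Finset V} (hQ : Opt H d Q) {a β γ : V}
    (haQ : a ∉ Q) (hβQ : β ∉ Q) (hγQ : γ ∉ Q) (hβγ : β ≠ γ)
    (haβ : H.Adj a β) (haγ : H.Adj a γ) (hβγadj : H.Adj β γ)
    (haP : a ∉ P)
    (hCP : n1 H Q a ⊆ P)
    (hCcl : ∀ y ∈ n1 H Q a, n1 H P y = (n1 H Q a).erase y)
    (hagree : ∀ f ∈ P, f ∉ Q → ∃ Cf, MemC H d P f Cf) :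
    ∀ t ∈ n1 H Q a, ∃ z₁ z₂ : V, ∃ C₁ C₂ : Finset V,
      MemCore H d P t (n1 H Q a) a z₁ z₂ C₁ C₂ := by
  intro t ht
  have hβb : β ∈ n2 H Q a := mem_n2.mpr ⟨haβ, hβQ⟩
  have hγb : γ ∈ n2 H Q a := mem_n2.mpr ⟨haγ, hγQ⟩
  obtain ⟨hclC, hn2a, hdega⟩ := vertexA hd6 hmax hQ haQ hβb hγb hβγ
  set C := n1 H Q a with hCdef
  obtain ⟨hOptQ', hn1t, hdegt, z₁, z₂, hz12, hz12adj, hn2t, haz⟩ :=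
    memberX hd6 hmax hQ haQ hβb hγb hβγ hβγadj ht
  have hz₁a : z₁ ≠ a := fun h => haz (h ▸ (by simp : z₁ ∈ ({z₁, z₂} : Finset V)))
  have hz₂a : z₂ ≠ a := fun h => haz (h ▸ (by simp : z₂ ∈ ({z₁, z₂} : Finset V)))
  obtain ⟨hz₁Q, hnaz₁, hclC₁, hC₁sub, htC₁, hn1z₁, hn2z₁, hdegz₁, hdisj₁, hclosed₁⟩ :=
    pairX hd6 hmax hno hQ haQ hβb hγb hβγ hβγadj ht hn2t hz12 hz12adj hz₁a hz₂a
  have hn2t' : n2 H Q t = {a, z₂, z₁} := by rw [hn2t]; exact triple_comm a z₁ z₂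
  obtain ⟨hz₂Q, hnaz₂, hclC₂, hC₂sub, htC₂, hn1z₂, hn2z₂, hdegz₂, hdisj₂, hclosed₂⟩ :=
    pairX hd6 hmax hno hQ haQ hβb hγb hβγ hβγadj ht hn2t' (Ne.symm hz12) hz12adj.symm hz₂a hz₁a
  set Q' := insert a (Q.erase t) with hQ'def
  set C₁ := n1 H Q' z₁ with hC₁def
  set C₂ := n1 H Q' z₂ with hC₂def
  have htQ : t ∈ Q := (mem_n1.mp ht).2
  have htP : t ∈ P := hCP ht
  have hCsubQ : C ⊆ Q := fun u hu => (mem_n1.mp hu).2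
  have hadjtz₁ : H.Adj t z₁ := by
    have : z₁ ∈ n2 H Q t := by rw [hn2t]; simp
    exact (mem_n2.mp this).1
  have hadjtz₂ : H.Adj t z₂ := by
    have : z₂ ∈ n2 H Q t := by rw [hn2t]; simp
    exact (mem_n2.mp this).1
  -- T1 : pair vertices are outside P
  have hz₁P : z₁ ∉ P :=
    pair_not_in_P haP ht hCP hCsubQ hCcl hz₁Q hadjtz₁ hagree
  have hz₂P : z₂ ∉ P :=
    pair_not_in_P haP ht hCP hCsubQ hCcl hz₂Q hadjtz₂ hagree
  -- the two descpairs
  obtain ⟨hdp₁, hC₁P⟩ := prodPair hd6 hP haP ht htQ hCP hn1t hn2t hz₁Q hz12 hz12adj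
    hz₁P hz₂P hclC₁ htC₁ hn1z₁ hn2z₁ hdisj₁ hclosed₁ hagree
  obtain ⟨hdp₂, hC₂P⟩ := prodPair hd6 hP haP ht htQ hCP hn1t hn2t' hz₂Q (Ne.symm hz12)
    hz12adj.symm hz₂P hz₁P hclC₂ htC₂ hn1z₂ hn2z₂ hdisj₂ hclosed₂ hagree
  -- T2 : transfer of t's neighborhoods
  have htagree : ∀ y, H.Adj t y → (y ∈ P ↔ y ∈ Q) := by
    intro y hy
    constructor
    · intro hyP
      by_contra hyQ
      have : y ∈ n2 H Q t := mem_n2.mpr ⟨hy, hyQ⟩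
      rw [hn2t, mem_insert, mem_insert, mem_singleton] at this
      rcases this with rfl | rfl | rfl
      · exact haP hyP
      · exact hz₁P hyP
      · exact hz₂P hyP
    · intro hyQ
      have : y ∈ n1 H Q t := mem_n1.mpr ⟨hy, hyQ⟩
      rw [hn1t] at this
      exact hCP (mem_of_mem_erase this)
  obtain ⟨hn1Pt, hn2Pt⟩ := n12_congr htagree
  rw [hn2t] at hn2Pt
  -- the witness for the new pair
  have hwit : Wit H d P z₁ z₂ t C₁ C₂ := by
    refine ⟨Q', hOptQ', ?_, ?_, ?_, ?_, ?_, ?_⟩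
    · rw [hQ'def, mem_insert]
      push_neg
      exact ⟨hz₁a, fun h => hz₁Q (mem_of_mem_erase h)⟩
    · rw [hQ'def, mem_insert]
      push_neg
      exact ⟨hz₂a, fun h => hz₂Q (mem_of_mem_erase h)⟩
    · rw [hQ'def, mem_insert]
      push_neg
      exact ⟨fun h => haQ (h ▸ htQ), fun h => (mem_erase.mp h).1 rfl⟩
    · intro u hu
      exact (mem_n1.mp hu).2
    · intro u hu
      exact (mem_n1.mp hu).2
    · intro f hfP hfQ'
      rw [hQ'def, mem_insert] at hfQ'
      push_neg at hfQ'
      obtain ⟨hfa, hfQ'2⟩ := hfQ'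
      by_cases hft : f = t
      · subst hft
        exact ⟨C, ht, hCP, hclC, hCcl⟩
      · refine hagree f hfP (fun hfQ => hfQ'2 (mem_erase.mpr ⟨hft, hfQ⟩))
  exact ⟨z₁, z₂, C₁, C₂, ⟨ht, hCP, hclC, hCcl⟩, hn2Pt,
    fun y hy => (mem_n1.mp hy).1, haP, hdp₁, hdp₂, hwit, hdisj₁, hdisj₂⟩

lemma class_unique {x : V} {C C' : Finset V} (hx : x ∈ C) (hx' : x ∈ C')
    (h1 : n1 H P x = C.erase x) (h2 : n1 H P x = C'.erase x) : C = C' := by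
  rw [← insert_erase hx, ← insert_erase hx', ← h1, ← h2]

lemma wit_position {Q : Finset V} {r x s : V} {Cr : Finset V}
    (hdp : DescPair H d P r Cr x s) (hxQ : x ∉ Q) (hsQ : s ∉ Q) (hCrQ : Cr ⊆ Q) :
    n1 H Q r = Cr := by
  obtain ⟨_, _, _, _, _, _, _, _, hxCr, _, hn1r, hn2r, _⟩ := hdp
  have hnbr : H.neighborFinset r = insert x Cr ∪ {s} := by
    rw [nb_decomp P r, hn1r, hn2r]
  ext u
  rw [mem_n1]
  constructor
  · rintro ⟨hadj, huQ⟩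
    have : u ∈ insert x Cr ∪ {s} := by
      rw [← hnbr, SimpleGraph.mem_neighborFinset]; exact hadj
    rw [mem_union, mem_insert, mem_singleton] at this
    rcases this with (rfl | h) | rfl
    · exact absurd huQ hxQ
    · exact h
    · exact absurd huQ hsQ
  · intro hu
    constructor
    · have : u ∈ n1 H P r := by rw [hn1r]; exact mem_insert_of_mem hu
      exact (mem_n1.mp this).1
    · exact hCrQ hu

lemma closure (hd6 : 6 ≤ d) (hmax : ∀ v : V, H.degree v ≤ d)
    (hno : ∀ s : Finset V, ¬ H.IsNClique d s) (hP : Opt H d P) :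
    ∀ z, Good H d P z → ∀ y, H.Adj z y → Good H d P y := by
  intro z hgood
  induction hgood with
  | triv v b c desc =>
    intro y hy
    obtain ⟨hvP, hbP, hcP, hbc, hadjbc, hadjvb, hadjvc, hn2v, hclv, hclov⟩ := desc
    have hynb : y ∈ n1 H P v ∪ n2 H P v := by
      rw [← nb_decomp P v, SimpleGraph.mem_neighborFinset]; exact hy
    rw [mem_union] at hynb
    rcases hynb with hyn1 | hyn2
    · -- y is a member of v's clique
      have hprod := production hd6 hmax hno hP hP hvP hbP hcP hbc hadjvb hadjvc hadjbc
        hvP (fun u hu => (mem_n1.mp hu).2) hclov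
        (fun f hf hnf => absurd hf hnf) y hyn1
      obtain ⟨z₁, z₂, C₁, C₂, core⟩ := hprod
      exact Good.memv y _ v z₁ z₂ C₁ C₂ core
        (Good.triv v b c ⟨hvP, hbP, hcP, hbc, hadjbc, hadjvb, hadjvc, hn2v, hclv, hclov⟩)
    · rw [hn2v, mem_insert, mem_singleton] at hyn2
      rcases hyn2 with rfl | rfl
      · exact Good.triv y v c (mk_DescTri hd6 hmax hP hbP hvP hcP (H.ne_of_adj hadjvc)
          hadjvb.symm hadjbc hadjvc)
      · exact Good.triv y v b (mk_DescTri hd6 hmax hP hcP hvP hbP (H.ne_of_adj hadjvb)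
          hadjvc.symm hadjbc.symm hadjvb)
  | memv x C p r s Cr Cs core gp ih =>
    intro y hy
    obtain ⟨⟨hxC, hCsubP, hclqC, hclC⟩, hn2x, hdom, hpP, hdpr, hdps, hwit, hdj1, hdj2⟩ := core
    have hn1x : n1 H P x = C.erase x := hclC x hxC
    have hynb : y ∈ C.erase x ∪ {p, r, s} := by
      rw [← hn1x, ← hn2x, ← nb_decomp P x, SimpleGraph.mem_neighborFinset]
      exact hy
    rw [mem_union, mem_insert, mem_insert, mem_singleton] at hynb
    rcases hynb with hyC | rfl | rfl | rfl
    · -- y is a sibling of x : activate the dominator p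
      cases gp with
      | triv p' b c descp =>
        obtain ⟨hpP', hbP, hcP, hbc, hadjbc, hadjpb, hadjpc, hn2p, hclp, hclop⟩ := descp
        have hxn1p : x ∈ n1 H P p := mem_n1.mpr ⟨hdom x hxC, hCsubP hxC⟩
        have hCeq : C = n1 H P p :=
          class_unique hxC hxn1p hn1x (hclop x hxn1p)
        have hprod := production hd6 hmax hno hP hP hpP' hbP hcP hbc hadjpb hadjpc hadjbc
          hpP' (fun u hu => (mem_n1.mp hu).2) hclop
          (fun f hf hnf => absurd hf hnf) y (by rw [← hCeq]; exact mem_of_mem_erase hyC)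
        obtain ⟨z₁, z₂, C₁, C₂, core'⟩ := hprod
        rw [← hCeq] at core'
        exact Good.memv y C p z₁ z₂ C₁ C₂ core'
          (Good.triv p b c ⟨hpP', hbP, hcP, hbc, hadjbc, hadjpb, hadjpc, hn2p, hclp, hclop⟩)
      | memv x' C' p' r' s' Cr' Cs' core' gp' =>
        exact absurd (core'.1.2.1 core'.1.1) hpP
      | pairv x' C' p' r' s' Cp' Cs' core' gp' =>
        -- here p = r' is a pair vertex with DescPair p Cp' x' s'
        have hdppK := core'.2.2.2.2.1
        have hwitpK := core'.2.2.2.2.2.2.1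
        obtain ⟨⟨hx'C', hC'subP, hclqC', hclC'⟩, hn2x', hdom', hp'P, hdpp, hdps', hwitp,
          hdj1', hdj2'⟩ := core'
        obtain ⟨hpP2, hs'P, hx'P, hps', hadjps', hadjx'p, hadjx's', hCp'P, hx'Cp', hclqCp',
          hn1p, hn2p, hclCp'⟩ := hdpp
        -- x ∈ Cp' and C = Cp'
        have hxnbp : x ∈ insert x' Cp' ∪ {s'} := by
          rw [← hn1p, ← hn2p, ← nb_decomp P p, SimpleGraph.mem_neighborFinset]
          exact hdom x hxC
        have hxCp' : x ∈ Cp' := by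
          rw [mem_union, mem_insert, mem_singleton] at hxnbp
          rcases hxnbp with (rfl | h) | rfl
          · -- x = x' : impossible
            exfalso
            have hyP : y ∈ P := hCsubP (mem_of_mem_erase hyC)
            have hynbp : y ∈ insert x Cp' ∪ {s'} := by
              rw [← hn1p, ← hn2p, ← nb_decomp P p, SimpleGraph.mem_neighborFinset]
              exact hdom y (mem_of_mem_erase hyC)
            rw [mem_union, mem_insert, mem_singleton] at hynbp
            rcases hynbp with (rfl | h) | rfl
            · exact (mem_erase.mp hyC).1 rfl
            · -- y ∈ Cp' : classes coincide, contradiction with x ∉ Cp'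
              have hCeq : C = Cp' :=
                class_unique (mem_of_mem_erase hyC) h
                  (hclC y (mem_of_mem_erase hyC)) (hclCp' y h)
              exact hx'Cp' (hCeq ▸ hxC)
            · exact hs'P hyP
          · exact h
          · exact absurd (hCsubP hxC) (fun _ => hs'P (by assumption))
        have hCeq : C = Cp' := class_unique hxC hxCp' hn1x (hclCp' x hxCp')
        -- activate p at its witness
        obtain ⟨Q, hQopt, hpQ, hs'Q, hx'Q, hCp'Q, hCs'Q, hagreeQ⟩ := hwitp
        have hn1Qp : n1 H Q p = Cp' :=
          wit_position ⟨hpP2, hs'P, hx'P, hps', hadjps', hadjx'p, hadjx's', hCp'P, hx'Cp',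
            hclqCp', hn1p, hn2p, hclCp'⟩ hx'Q hs'Q hCp'Q
        have hx's' : x' ≠ s' := fun h => hs'P (h ▸ hx'P)
        have hprod := production hd6 hmax hno hP hQopt hpQ hx'Q hs'Q hx's'
          hadjx'p.symm hadjps' hadjx's' hpP2
          (by rw [hn1Qp]; exact hCp'P) (by rw [hn1Qp]; exact hclCp') hagreeQ
          y (by rw [hn1Qp, ← hCeq]; exact mem_of_mem_erase hyC)
        obtain ⟨z₁, z₂, C₁, C₂, core''⟩ := hprod
        rw [hn1Qp, ← hCeq] at core''
        exact Good.memv y C p z₁ z₂ C₁ C₂ core''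
          (Good.pairv x' C' p' p s' Cp' Cs' ⟨⟨hx'C', hC'subP, hclqC', hclC'⟩, hn2x', hdom',
            hp'P, hdppK, hdps', hwitpK, hdj1', hdj2'⟩ gp')
    · exact gp
    · exact Good.pairv x C p y s Cr Cs
        ⟨⟨hxC, hCsubP, hclqC, hclC⟩, hn2x, hdom, hpP, hdpr, hdps, hwit, hdj1, hdj2⟩ gp
    · exact Good.pairv x C p y r Cs Cr
        (memcore_swap ⟨⟨hxC, hCsubP, hclqC, hclC⟩, hn2x, hdom, hpP, hdpr, hdps, hwit,
          hdj1, hdj2⟩) gp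
  | pairv x C p r s Cr Cs core gp ih =>
    intro y hy
    have hdprK := core.2.2.2.2.1
    have hwitK := core.2.2.2.2.2.2.1
    obtain ⟨⟨hxC, hCsubP, hclqC, hclC⟩, hn2x, hdom, hpP, hdpr, hdps, hwit, hdj1, hdj2⟩ := core
    obtain ⟨hrP, hsP, hxP, hrs, hadjrs, hadjxr, hadjxs, hCrP, hxCr, hclqCr, hn1r, hn2r,
      hclCr⟩ := hdpr
    have hynb : y ∈ insert x Cr ∪ {s} := by
      rw [← hn1r, ← hn2r, ← nb_decomp P r, SimpleGraph.mem_neighborFinset]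
      exact hy
    rw [mem_union, mem_insert, mem_singleton] at hynb
    rcases hynb with (rfl | hyCr) | rfl
    · exact Good.memv y C p r s Cr Cs
        ⟨⟨hxC, hCsubP, hclqC, hclC⟩, hn2x, hdom, hpP, hdprK, hdps, hwitK, hdj1, hdj2⟩ gp
    · -- y ∈ Cr : activate r at its witness
      obtain ⟨Q, hQopt, hrQ, hsQ, hxQ, hCrQ, hCsQ, hagreeQ⟩ := hwitK
      have hn1Qr : n1 H Q r = Cr :=
        wit_position ⟨hrP, hsP, hxP, hrs, hadjrs, hadjxr, hadjxs, hCrP, hxCr, hclqCr,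
          hn1r, hn2r, hclCr⟩ hxQ hsQ hCrQ
      have hxs : x ≠ s := fun h => hsP (h ▸ hxP)
      have hprod := production hd6 hmax hno hP hQopt hrQ hxQ hsQ hxs
        hadjxr.symm hadjrs hadjxs hrP
        (by rw [hn1Qr]; exact hCrP) (by rw [hn1Qr]; exact hclCr) hagreeQ
        y (by rw [hn1Qr]; exact hyCr)
      obtain ⟨z₁, z₂, C₁, C₂, core''⟩ := hprod
      rw [hn1Qr] at core''
      have hgoodr : Good H d P r := Good.pairv x C p r s Cr Cs
        ⟨⟨hxC, hCsubP, hclqC, hclC⟩, hn2x, hdom, hpP,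
          ⟨hrP, hsP, hxP, hrs, hadjrs, hadjxr, hadjxs, hCrP, hxCr, hclqCr, hn1r, hn2r,
            hclCr⟩, hdps, ⟨Q, hQopt, hrQ, hsQ, hxQ, hCrQ, hCsQ, hagreeQ⟩, hdj1, hdj2⟩ gp
      exact Good.memv y Cr r z₁ z₂ C₁ C₂ core'' hgoodr
    · exact Good.pairv x C p y r Cs Cr
        (memcore_swap ⟨⟨hxC, hCsubP, hclqC, hclC⟩, hn2x, hdom, hpP,
          ⟨hrP, hsP, hxP, hrs, hadjrs, hadjxr, hadjxs, hCrP, hxCr, hclqCr, hn1r, hn2r,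
            hclCr⟩, hdps, hwitK, hdj1, hdj2⟩) gp

section Count

lemma prod_count_fst {α β : Type} [DecidableEq α] [DecidableEq β] (A : Finset α) (B : Finset β)
    (p : α → β → Prop) [∀ a b, Decidable (p a b)] :
    ((A ×ˢ B).filter fun x => p x.1 x.2).card
      = ∑ a ∈ A, (B.filter (fun b => p a b)).card := by
  rw [Finset.card_eq_sum_card_fiberwise (f := Prod.fst) (t := A)
    (fun x hx => (mem_product.mp (mem_filter.mp hx).1).1)]
  refine Finset.sum_congr rfl ?_
  intro a ha
  refine Finset.card_bij (fun x _ => x.2) ?_ ?_ ?_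
  · intro x hx
    simp only [mem_filter, mem_product] at hx ⊢
    obtain ⟨⟨⟨_, hB⟩, hp⟩, hfst⟩ := hx
    subst hfst
    exact ⟨hB, hp⟩
  · intro x hx y hy hxy
    simp only [mem_filter, mem_product] at hx hy
    obtain ⟨_, h1⟩ := hx
    obtain ⟨_, h2⟩ := hy
    exact Prod.ext (h1.trans h2.symm) hxy
  · intro b hb
    simp only [mem_filter] at hb
    exact ⟨(a, b), by simp [mem_filter, mem_product, ha, hb.1, hb.2], rfl⟩

lemma prod_count_snd {α β : Type} [DecidableEq α] [DecidableEq β] (A : Finset α) (B : Finset β)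
    (p : α → β → Prop) [∀ a b, Decidable (p a b)] :
    ((A ×ˢ B).filter fun x => p x.1 x.2).card
      = ∑ b ∈ B, (A.filter (fun a => p a b)).card := by
  rw [Finset.card_eq_sum_card_fiberwise (f := Prod.snd) (t := B)
    (fun x hx => (mem_product.mp (mem_filter.mp hx).1).2)]
  refine Finset.sum_congr rfl ?_
  intro b hb
  refine Finset.card_bij (fun x _ => x.1) ?_ ?_ ?_
  · intro x hx
    simp only [mem_filter, mem_product] at hx ⊢
    obtain ⟨⟨⟨hA, _⟩, hp⟩, hsnd⟩ := hx
    subst hsnd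
    exact ⟨hA, hp⟩
  · intro x hx y hy hxy
    simp only [mem_filter, mem_product] at hx hy
    obtain ⟨_, h1⟩ := hx
    obtain ⟨_, h2⟩ := hy
    exact Prod.ext hxy (h1.trans h2.symm)
  · intro a ha
    simp only [mem_filter] at ha
    exact ⟨(a, b), by simp [mem_filter, mem_product, hb, ha.1, ha.2], rfl⟩

/-- canonical class of a vertex -/
def cls (H : SimpleGraph V) [DecidableRel H.Adj] (P : Finset V) (x : V) : Finset V :=
  insert x (n1 H P x)

/-- the global counting contradiction -/
lemma counting (hd6 : 6 ≤ d) (hP : Opt H d P)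
    (hall : ∀ z, Good H d P z) (hPne : P.Nonempty) : False := by
  classical
  -- member facts
  have memfact : ∀ x ∈ P, ∃ C p r s Cr Cs, MemCore H d P x C p r s Cr Cs ∧ cls H P x = C := by
    intro x hxP
    cases hall x with
    | triv v b c desc => exact absurd hxP desc.1
    | memv x' C p r s Cr Cs core gp =>
      refine ⟨C, p, r, s, Cr, Cs, core, ?_⟩
      unfold cls
      rw [core.1.2.2.2 x core.1.1, insert_erase core.1.1]
    | pairv x' C p r s Cr Cs core gp =>
      exact absurd hxP core.2.2.2.2.1.1
  -- class basics
  have hclsP : ∀ x ∈ P, x ∈ cls H P x ∧ cls H P x ⊆ P ∧ (cls H P x).card = d - 2 ∧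
      (∀ y ∈ cls H P x, cls H P y = cls H P x) := by
    intro x hxP
    obtain ⟨C, p, r, s, Cr, Cs, core, hceq⟩ := memfact x hxP
    obtain ⟨⟨hxC, hCsubP, hclqC, hclC⟩, _⟩ := core
    rw [hceq]
    refine ⟨hxC, hCsubP, hclqC.card_eq, ?_⟩
    intro y hyC
    unfold cls
    rw [hclC y hyC, insert_erase hyC]
  -- the class set
  set S : Finset (Finset V) := P.image (cls H P) with hSdef
  -- key : each member's outside neighbourhood is {p,r,s} with p the unique dominator
  have key : ∀ x ∈ P, ∃ p r s : V, n2 H P x = {p, r, s} ∧ r ≠ s ∧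
      cls H P x ⊆ H.neighborFinset p ∧ ¬ cls H P x ⊆ H.neighborFinset r ∧
      ¬ cls H P x ⊆ H.neighborFinset s := by
    intro x hxP
    obtain ⟨C, p, r, s, Cr, Cs, core, hceq⟩ := memfact x hxP
    obtain ⟨⟨hxC, hCsubP, hclqC, hclC⟩, hn2x, hdom, hpP, hdpr, hdps, hwit, hdj1, hdj2⟩ := core
    have hCcard : C.card = d - 2 := hclqC.card_eq
    have hCne : ∃ y ∈ C, y ≠ x := by
      have : (C.erase x).Nonempty := by
        rw [← card_pos, card_erase_of_mem hxC]
        omega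
      obtain ⟨y, hy⟩ := this
      exact ⟨y, mem_of_mem_erase hy, (mem_erase.mp hy).1⟩
    have hnd : ∀ u Cu su, DescPair H d P u Cu x su → Cu ∩ C = ∅ →
        ¬ C ⊆ H.neighborFinset u := by
      intro u Cu su hdp hdj hsub
      obtain ⟨huP, hsuP, hxP', husu, hadjusu, hadjxu, hadjxsu, hCuP, hxCu, hclqCu,
        hn1u, hn2u, hclCu⟩ := hdp
      obtain ⟨y, hyC, hyx⟩ := hCne
      have : y ∈ insert x Cu ∪ {su} := by
        rw [← hn1u, ← hn2u, ← nb_decomp P u, SimpleGraph.mem_neighborFinset]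
        have := hsub hyC
        rw [SimpleGraph.mem_neighborFinset] at this
        exact this
      rw [mem_union, mem_insert, mem_singleton] at this
      rcases this with (rfl | h) | rfl
      · exact hyx rfl
      · have : y ∈ Cu ∩ C := mem_inter.mpr ⟨h, hyC⟩
        rw [hdj] at this
        exact notMem_empty _ this
      · exact hsuP (hCsubP hyC)
    refine ⟨p, r, s, hn2x, hdpr.2.2.2.1, ?_, ?_, ?_⟩
    · rw [hceq]
      intro y hy
      rw [SimpleGraph.mem_neighborFinset]
      exact hdom y hy
    · rw [hceq]; exact hnd r Cr s hdpr hdj1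
    · rw [hceq]; exact hnd s Cs r hdps hdj2
  -- fact 3 : each member has exactly two non-dominating outside neighbours
  have fact3 : ∀ x ∈ P,
      ((n2 H P x).filter (fun q => ¬ cls H P x ⊆ H.neighborFinset q)).card = 2 := by
    intro x hxP
    obtain ⟨p, r, s, hn2x, hrs, hp, hr, hs⟩ := key x hxP
    have hfil : (n2 H P x).filter (fun q => ¬ cls H P x ⊆ H.neighborFinset q) = {r, s} := by
      rw [hn2x]
      ext q
      simp only [mem_filter, mem_insert, mem_singleton]
      constructor
      · rintro ⟨(rfl | rfl | rfl), hq⟩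
        · exact absurd hp hq
        · exact Or.inl rfl
        · exact Or.inr rfl
      · rintro (rfl | rfl)
        · exact ⟨Or.inr (Or.inl rfl), hr⟩
        · exact ⟨Or.inr (Or.inr rfl), hs⟩
    rw [hfil, card_insert_of_notMem (by simp [hrs]), card_singleton]
  -- fact 4 : outside vertices have at most one attach
  have fact4 : ∀ q ∉ P,
      ((n1 H P q).filter (fun x => ¬ cls H P x ⊆ H.neighborFinset q)).card ≤ 1 := by
    intro q hqP
    cases hall q with
    | memv x' C p r s Cr Cs core gp => exact absurd (core.1.2.1 core.1.1) hqP
    | triv v b c desc =>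
      have hfil : (n1 H P q).filter (fun x => ¬ cls H P x ⊆ H.neighborFinset q) = ∅ := by
        rw [eq_empty_iff_forall_notMem]
        intro x hx
        rw [mem_filter] at hx
        obtain ⟨hx1, hx2⟩ := hx
        refine hx2 ?_
        have hclsx : cls H P x = n1 H P q := by
          unfold cls
          rw [desc.2.2.2.2.2.2.2.2.2 x hx1, insert_erase hx1]
        rw [hclsx]
        intro y hy
        rw [SimpleGraph.mem_neighborFinset]
        exact (mem_n1.mp hy).1
      rw [hfil]; simp
    | pairv x' C p r s Cr Cs core gp =>
      obtain ⟨_, _, _, _, hdpr, _, _, _, _⟩ := core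
      obtain ⟨hrP, hsP, hx'P, hrs, hadjrs, hadjxr, hadjxs, hCrP, hx'Cr, hclqCr,
        hn1r, hn2r, hclCr⟩ := hdpr
      have hsub : (n1 H P q).filter (fun x => ¬ cls H P x ⊆ H.neighborFinset q)
          ⊆ {x'} := by
        intro x hx
        rw [mem_filter] at hx
        obtain ⟨hx1, hx2⟩ := hx
        rw [hn1r, mem_insert] at hx1
        rcases hx1 with rfl | hx1
        · exact mem_singleton_self _
        · exfalso
          refine hx2 ?_
          have hclsx : cls H P x = Cr := by
            unfold cls
            rw [hclCr x hx1, insert_erase hx1]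
          rw [hclsx]
          intro y hy
          rw [SimpleGraph.mem_neighborFinset]
          have : y ∈ n1 H P q := by rw [hn1r]; exact mem_insert_of_mem hy
          exact (mem_n1.mp this).1
      calc _ ≤ ({x'} : Finset V).card := card_le_card hsub
        _ = 1 := card_singleton _
  -- fact 5 : each outside vertex dominates exactly one class
  have fact5 : ∀ q ∉ P, (S.filter (fun K => K ⊆ H.neighborFinset q)).card = 1 := by
    intro q hqP
    have hKS : ∀ y ∈ P, ∀ K, (∀ u ∈ K, n1 H P u = K.erase u) → y ∈ K → cls H P y = K := by
      intro y hyP K hcl hyK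
      unfold cls
      rw [hcl y hyK, insert_erase hyK]
    cases hall q with
    | memv x' C p r s Cr Cs core gp => exact absurd (core.1.2.1 core.1.1) hqP
    | triv v b c desc =>
      obtain ⟨hvP, hbP, hcP, hbc, hadjbc, hadjvb, hadjvc, hn2v, hclv, hclov⟩ := desc
      have hne : (n1 H P q).Nonempty := by
        rw [← card_pos, hclv.card_eq]; omega
      obtain ⟨y, hy⟩ := hne
      have hyP : y ∈ P := (mem_n1.mp hy).2
      have hmemS : n1 H P q ∈ S := by
        rw [hSdef, mem_image]
        exact ⟨y, hyP, hKS y hyP _ hclov hy⟩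
      have hfil : S.filter (fun K => K ⊆ H.neighborFinset q) = {n1 H P q} := by
        ext K'
        simp only [mem_filter, mem_singleton]
        constructor
        · rintro ⟨hK'S, hK'sub⟩
          rw [hSdef, mem_image] at hK'S
          obtain ⟨x₀, hx₀P, rfl⟩ := hK'S
          obtain ⟨hx₀c, hsubP, hcard, _⟩ := hclsP x₀ hx₀P
          refine eq_of_subset_of_card_le ?_ ?_
          · intro u hu
            exact mem_n1.mpr ⟨by
              have := hK'sub hu
              rw [SimpleGraph.mem_neighborFinset] at this
              exact this, hsubP hu⟩
          · rw [hclv.card_eq, hcard]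
        · rintro rfl
          refine ⟨hmemS, ?_⟩
          intro u hu
          rw [SimpleGraph.mem_neighborFinset]
          exact (mem_n1.mp hu).1
      rw [hfil, card_singleton]
    | pairv x' C p r s Cr Cs core gp =>
      have hdpr := core.2.2.2.2.1
      obtain ⟨hrP, hsP, hx'P, hrs, hadjrs, hadjxr, hadjxs, hCrP, hx'Cr, hclqCr,
        hn1r, hn2r, hclCr⟩ := hdpr
      have hne : Cr.Nonempty := by
        rw [← card_pos, hclqCr.card_eq]; omega
      obtain ⟨y, hy⟩ := hne
      have hmemS : Cr ∈ S := by
        rw [hSdef, mem_image]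
        exact ⟨y, hCrP hy, hKS y (hCrP hy) _ hclCr hy⟩
      have hfil : S.filter (fun K => K ⊆ H.neighborFinset q) = {Cr} := by
        ext K'
        simp only [mem_filter, mem_singleton]
        constructor
        · rintro ⟨hK'S, hK'sub⟩
          rw [hSdef, mem_image] at hK'S
          obtain ⟨x₀, hx₀P, rfl⟩ := hK'S
          obtain ⟨hx₀c, hsubP, hcard, hccc⟩ := hclsP x₀ hx₀P
          have hsub2 : cls H P x₀ ⊆ insert x' Cr := by
            intro u hu
            have h1 : u ∈ n1 H P q := mem_n1.mpr ⟨by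
              have := hK'sub hu
              rw [SimpleGraph.mem_neighborFinset] at this
              exact this, hsubP hu⟩
            rw [hn1r] at h1
            exact h1
          have hx'K : x' ∉ cls H P x₀ := by
            intro hx'K
            have hcx' : cls H P x' = cls H P x₀ := hccc x' hx'K
            -- x' has its own class C with Cr ∩ C = ∅
            have hclsx' : cls H P x' = C := by
              have hmc := core.1
              unfold cls
              rw [hmc.2.2.2 x' hmc.1, insert_erase hmc.1]
            have hCsub : C ⊆ insert x' Cr := by
              rw [← hclsx', hcx']; exact hsub2
            have hCcard : C.card = d - 2 := core.1.2.2.1.card_eq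
            have hne2 : (C.erase x').Nonempty := by
              rw [← card_pos, card_erase_of_mem core.1.1]; omega
            obtain ⟨w, hw⟩ := hne2
            have hwCr : w ∈ Cr := by
              have := hCsub (mem_of_mem_erase hw)
              rw [mem_insert] at this
              rcases this with rfl | h
              · exact absurd rfl (mem_erase.mp hw).1
              · exact h
            have : w ∈ Cr ∩ C := mem_inter.mpr ⟨hwCr, mem_of_mem_erase hw⟩
            rw [core.2.2.2.2.2.2.2.1] at this
            exact notMem_empty _ this
          have hsub3 : cls H P x₀ ⊆ Cr := by
            intro u hu
            have := hsub2 hu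
            rw [mem_insert] at this
            rcases this with rfl | h
            · exact absurd hu hx'K
            · exact h
          exact eq_of_subset_of_card_le hsub3 (by rw [hclqCr.card_eq, hcard])
        · rintro rfl
          refine ⟨hmemS, ?_⟩
          intro u hu
          rw [SimpleGraph.mem_neighborFinset]
          have : u ∈ n1 H P q := by rw [hn1r]; exact mem_insert_of_mem hu
          exact (mem_n1.mp this).1
      rw [hfil, card_singleton]
  -- fact 6 : each class has exactly one dominator
  have fact6 : ∀ K ∈ S, ((Pᶜ).filter (fun q => K ⊆ H.neighborFinset q)).card = 1 := by
    intro K hKS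
    rw [hSdef, mem_image] at hKS
    obtain ⟨x, hxP, rfl⟩ := hKS
    obtain ⟨p, r, s, hn2x, hrs, hp, hr, hs⟩ := key x hxP
    have hxc := (hclsP x hxP).1
    have hpn2 : p ∈ n2 H P x := by rw [hn2x]; simp
    have hfil : (Pᶜ).filter (fun q => cls H P x ⊆ H.neighborFinset q) = {p} := by
      ext q
      simp only [mem_filter, mem_compl, mem_singleton]
      constructor
      · rintro ⟨hqP, hqsub⟩
        have : q ∈ n2 H P x := mem_n2.mpr ⟨by
          have := hqsub hxc
          rw [SimpleGraph.mem_neighborFinset] at this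
          exact this.symm, hqP⟩
        rw [hn2x, mem_insert, mem_insert, mem_singleton] at this
        rcases this with rfl | rfl | rfl
        · rfl
        · exact absurd hqsub hr
        · exact absurd hqsub hs
      · rintro rfl
        exact ⟨(mem_n2.mp hpn2).2, hp⟩
    rw [hfil, card_singleton]
  -- fact 7 : each member lies in exactly one class
  have fact7 : ∀ x ∈ P, (S.filter (fun K => x ∈ K)).card = 1 := by
    intro x hxP
    obtain ⟨hxc, hsubP, hcard, hccc⟩ := hclsP x hxP
    have hfil : S.filter (fun K => x ∈ K) = {cls H P x} := by
      ext K'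
      simp only [mem_filter, mem_singleton]
      constructor
      · rintro ⟨hK'S, hxK'⟩
        rw [hSdef, mem_image] at hK'S
        obtain ⟨x₀, hx₀P, rfl⟩ := hK'S
        exact ((hclsP x₀ hx₀P).2.2.2 x hxK').symm
      · rintro rfl
        exact ⟨by rw [hSdef, mem_image]; exact ⟨x, hxP, rfl⟩, hxc⟩
    rw [hfil, card_singleton]
  -- fact 8 : each class has d-2 members
  have fact8 : ∀ K ∈ S, (P.filter (fun x => x ∈ K)).card = d - 2 := by
    intro K hKS
    rw [hSdef, mem_image] at hKS
    obtain ⟨x, hxP, rfl⟩ := hKS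
    obtain ⟨hxc, hsubP, hcard, _⟩ := hclsP x hxP
    have : P.filter (fun y => y ∈ cls H P x) = cls H P x := by
      ext y
      simp only [mem_filter]
      exact ⟨fun h => h.2, fun h => ⟨hsubP h, h⟩⟩
    rw [this, hcard]
  -- counting
  have hI2a : ((Pᶜ ×ˢ S).filter (fun qK => qK.2 ⊆ H.neighborFinset qK.1)).card
      = (Pᶜ).card := by
    rw [prod_count_fst (Pᶜ) S (fun q K => K ⊆ H.neighborFinset q)]
    rw [Finset.sum_congr rfl (fun q hq => fact5 q (mem_compl.mp hq))]
    simp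
  have hI2b : ((Pᶜ ×ˢ S).filter (fun qK => qK.2 ⊆ H.neighborFinset qK.1)).card
      = S.card := by
    rw [prod_count_snd (Pᶜ) S (fun q K => K ⊆ H.neighborFinset q)]
    rw [Finset.sum_congr rfl (fun K hK => fact6 K hK)]
    simp
  have hI3a : ((P ×ˢ S).filter (fun xK => xK.1 ∈ xK.2)).card = P.card := by
    rw [prod_count_fst P S (fun x K => x ∈ K)]
    rw [Finset.sum_congr rfl (fun x hx => fact7 x hx)]
    simp
  have hI3b : ((P ×ˢ S).filter (fun xK => xK.1 ∈ xK.2)).card = (d - 2) * S.card := by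
    rw [prod_count_snd P S (fun x K => x ∈ K)]
    rw [Finset.sum_congr rfl (fun K hK => fact8 K hK)]
    rw [Finset.sum_const, smul_eq_mul, mul_comm]
  have hNa : ((P ×ˢ (Pᶜ)).filter (fun xq => H.Adj xq.1 xq.2 ∧
      ¬ cls H P xq.1 ⊆ H.neighborFinset xq.2)).card = 2 * P.card := by
    rw [prod_count_fst P (Pᶜ)
      (fun x q => H.Adj x q ∧ ¬ cls H P x ⊆ H.neighborFinset q)]
    have : ∀ x ∈ P, ((Pᶜ).filter (fun q => H.Adj x q ∧
        ¬ cls H P x ⊆ H.neighborFinset q)).card = 2 := by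
      intro x hx
      have : (Pᶜ).filter (fun q => H.Adj x q ∧ ¬ cls H P x ⊆ H.neighborFinset q)
          = (n2 H P x).filter (fun q => ¬ cls H P x ⊆ H.neighborFinset q) := by
        ext q
        simp only [mem_filter, mem_compl, mem_n2]
        tauto
      rw [this]
      exact fact3 x hx
    rw [Finset.sum_congr rfl this, Finset.sum_const, smul_eq_mul, mul_comm]
  have hNb : ((P ×ˢ (Pᶜ)).filter (fun xq => H.Adj xq.1 xq.2 ∧
      ¬ cls H P xq.1 ⊆ H.neighborFinset xq.2)).card ≤ (Pᶜ).card := by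
    rw [prod_count_snd P (Pᶜ)
      (fun x q => H.Adj x q ∧ ¬ cls H P x ⊆ H.neighborFinset q)]
    calc _ ≤ ∑ _q ∈ Pᶜ, 1 := by
          refine Finset.sum_le_sum ?_
          intro q hq
          have : P.filter (fun x => H.Adj x q ∧ ¬ cls H P x ⊆ H.neighborFinset q)
              ⊆ (n1 H P q).filter (fun x => ¬ cls H P x ⊆ H.neighborFinset q) := by
            intro x hx
            simp only [mem_filter, mem_n1] at hx ⊢
            exact ⟨⟨hx.2.1.symm, hx.1⟩, hx.2.2⟩
          calc _ ≤ ((n1 H P q).filter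
                (fun x => ¬ cls H P x ⊆ H.neighborFinset q)).card := card_le_card this
            _ ≤ 1 := fact4 q (mem_compl.mp hq)
      _ = (Pᶜ).card := by simp
  -- final arithmetic
  have h1 : P.card = (d - 2) * S.card := hI3a ▸ hI3b
  have h2 : (Pᶜ).card = S.card := hI2a ▸ hI2b
  have h3 : 2 * P.card ≤ S.card := by
    calc 2 * P.card = _ := hNa.symm
      _ ≤ (Pᶜ).card := hNb
      _ = S.card := h2
  have h4 : 1 ≤ P.card := card_pos.mpr hPne
  have h5 : 8 * S.card ≤ 2 * ((d-2) * S.card) := by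
    have : 4 ≤ d - 2 := by omega
    calc 8 * S.card = 2 * (4 * S.card) := by ring
      _ ≤ 2 * ((d-2) * S.card) := by
          refine Nat.mul_le_mul_left 2 ?_
          exact Nat.mul_le_mul_right _ this
  rw [← h1] at h5
  omega

end Count

end Glob

section Final

lemma good_all (hconn : H.Connected) {P : Finset V} {u : V} (hu : Good H d P u)
    (hcl : ∀ z, Good H d P z → ∀ y, H.Adj z y → Good H d P y) :
    ∀ z, Good H d P z := by
  intro z
  have hw : ∀ (a b : V), H.Walk a b → Good H d P a → Good H d P b := by
    intro a b w
    induction w with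
    | nil => exact id
    | cons h p ih => exact fun ha => ih (hcl _ ha _ h)
  obtain ⟨w⟩ := hconn.preconnected u z
  exact hw u z w hu

lemma triangle_of_tr {B : Finset V} (h : tr H B ≠ 0) :
    ∃ u v w : V, u ∈ B ∧ v ∈ B ∧ w ∈ B ∧ H.Adj u v ∧ H.Adj u w ∧ H.Adj v w := by
  unfold tr at h
  rw [← Nat.pos_iff_ne_zero, card_pos] at h
  obtain ⟨t, ht⟩ := h
  simp only [mem_filter, mem_powersetCard] at ht
  obtain ⟨⟨htB, _⟩, hcl⟩ := ht
  rw [SimpleGraph.is3Clique_iff] at hcl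
  obtain ⟨a, b, c, hab, hac, hbc, rfl⟩ := hcl
  exact ⟨a, b, c, htB (by simp), htB (by simp), htB (by simp), hab, hac, hbc⟩

/-- the main theorem, internal version -/
theorem main (hconn : H.Connected) (hd6 : 6 ≤ d)
    (hmax : ∀ v : V, H.degree v ≤ d)
    (hno : ∀ s : Finset V, ¬ H.IsNClique d s) :
    ∃ A : Finset V, free H d A ∧ tr H Aᶜ = 0 := by
  obtain ⟨A, hA⟩ := exists_opt (H := H) hd6
  refine ⟨A, hA.1, ?_⟩
  by_contra htr
  obtain ⟨u, v, w, hu, hv, hw, huv, huw, hvw⟩ := triangle_of_tr htr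
  rw [mem_compl] at hu hv hw
  have hgood : Good H d A u :=
    Good.triv u v w (mk_DescTri hd6 hmax hA hu hv hw (H.ne_of_adj hvw) huv huw hvw)
  have hall := good_all hconn hgood (closure hd6 hmax hno hA)
  have hPne : A.Nonempty := by
    obtain ⟨v₀⟩ := hconn.nonempty
    have hfree : free H d {v₀} := by
      intro t ht hcl
      have h1 : t.card ≤ 1 := le_trans (card_le_card ht) (by simp)
      have h2 := hcl.card_eq
      omega
    have := hA.2.1 {v₀} hfree
    rw [card_singleton] at this
    rw [← card_pos]
    omega
  exact counting hd6 hA hall hPne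

end Final

end BK

open BK in
theorem statement6 {V : Type} [Fintype V] [DecidableEq V]
    (H : SimpleGraph V) [DecidableRel H.Adj]
    (hconn : H.Connected) (d : ℕ) (hd : H.maxDegree = d) (hd6 : 6 ≤ d)
    (hω : H.cliqueNum = d - 1) :
    ∃ V₁ V₂ : Finset V, Disjoint V₁ V₂ ∧ V₁ ∪ V₂ = Finset.univ ∧
      -- `H[V₁]` contains no clique of size `d - 1`
      (∀ t : Finset V, ↑t ⊆ (V₁ : Set V) → ¬ H.IsNClique (d - 1) t) ∧
      -- `H[V₂]` contains no triangle
      (∀ t : Finset V, ↑t ⊆ (V₂ : Set V) → ¬ H.IsNClique 3 t) := by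
  classical
  have hmax : ∀ v : V, H.degree v ≤ d := fun v => hd ▸ H.degree_le_maxDegree v
  have hno : ∀ s : Finset V, ¬ H.IsNClique d s := by
    intro s hs
    have h1 : s.card ≤ H.cliqueNum := hs.1.card_le_cliqueNum
    rw [hs.card_eq, hω] at h1
    omega
  obtain ⟨A, hfree, htr⟩ := main hconn hd6 hmax hno
  refine ⟨A, Aᶜ, disjoint_compl_right, Finset.union_compl A, ?_, ?_⟩
  · intro t ht
    exact hfree t (Finset.coe_subset.mp ht)
  · intro t ht hcl
    have htA : t ⊆ Aᶜ := Finset.coe_subset.mp (by exact_mod_cast ht)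
    have : t ∈ ((Aᶜ).powersetCard 3).filter (fun t => H.IsNClique 3 t) := by
      rw [Finset.mem_filter, Finset.mem_powersetCard]
      exact ⟨⟨htA, hcl.card_eq⟩, hcl⟩
    have h2 : tr H Aᶜ ≠ 0 := by
      unfold tr
      rw [← Nat.pos_iff_ne_zero, Finset.card_pos]
      exact ⟨t, this⟩
    exact h2 htr
end
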